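/- Let n ≥ 3. Every PCR-type cycle P of the PRR of order n other than the cycle {(1,…,1)} contains at least one state whose first coordinate is 0; choose one such state sel(P) in each such cycle. For c = (c_0,…,c_{n-1}) ∈ F₂ⁿ define the state x_c by: x_c = (0, c_1,…,c_{n-1}) if c_{n-1} = 0, and x_c = (c_1+1, c_2+1, …, c_{n-2}+1, 0, c_1) if c_{n-1} = 1. Let A = { c ∈ F₂ⁿ : either (c_{n-1} = 0 and x_c = sel(P), where P is the (PCR-type) cycle containing x_c), or (c_{n-1} = 1 and x_c is the cycle representative of the (CCR-type) cycle containing x_c) }. Then, for every such choice of the states sel(P), the successor rule Υ defined by Υ(c) = c_0 + c_1 + c_{n-1} + 1 if c ∈ A and Υ(c) = c_0 + c_1 + c_{n-1} otherwise generates a de Bruijn sequence of order n. -/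

import Mathlib

attribute [local instance] Classical.propDecidable

abbrev F2 := ZMod 2

/-- Coordinate access with default value `0` outside the range. -/
noncomputable def get {n : ℕ} (c : Fin n → F2) (j : ℕ) : F2 :=
  if h : j < n then c ⟨j, h⟩ else 0

/-- Lexicographic order on binary tuples (coordinates compared from index 0, with 0 < 1). -/
def lexLe {m : ℕ} (v w : Fin m → F2) : Prop :=
  ∀ j : Fin m, (∀ i : Fin m, i < j → v i = w i) → (v j).val ≤ (w j).val

def lexLt {m : ℕ} (v w : Fin m → F2) : Prop := lexLe v w ∧ v ≠ w

/-- Left cyclic rotation by `r`. -/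
def rot {m : ℕ} (r : ℕ) (w : Fin m → F2) : Fin m → F2 :=
  fun i => w ⟨((i : ℕ) + r) % m, Nat.mod_lt _ i.pos⟩

/-- `w` is lexicographically minimal among its cyclic rotations. -/
def IsNecklace {m : ℕ} (w : Fin m → F2) : Prop := ∀ r : ℕ, lexLe w (rot r w)

/-- `w` followed by its coordinatewise complement. -/
def complAppend {m : ℕ} (w : Fin m → F2) : Fin (2 * m) → F2 :=
  fun i => if h : (i : ℕ) < m then w ⟨(i : ℕ), h⟩
           else w ⟨(i : ℕ) - m, by have := i.isLt; omega⟩ + 1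

def IsCoNecklace {m : ℕ} (w : Fin m → F2) : Prop := IsNecklace (complAppend w)

/-- The last `n-1` coordinates of an `n`-stage state. -/
def stTail {n : ℕ} (c : Fin n → F2) : Fin (n - 1) → F2 :=
  fun i => c ⟨(i : ℕ) + 1, by have := i.isLt; omega⟩

/-- The state map of a successor rule/feedback function:
`(c_0,…,c_{n-1}) ↦ (c_1,…,c_{n-1}, ρ(c))`. -/
def nextMap {n : ℕ} (ρ : (Fin n → F2) → F2) (c : Fin n → F2) : Fin n → F2 :=
  fun i => if h : (i : ℕ) + 1 < n then c ⟨(i : ℕ) + 1, h⟩ else ρ c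

/-- Feedback of the pure run-length register: `c_0 + c_1 + c_{n-1}`. -/
noncomputable def fPRR {n : ℕ} (c : Fin n → F2) : F2 :=
  get c 0 + get c 1 + get c (n - 1)

/-- The successor rule `ρ` generates a de Bruijn sequence of order `n`,
i.e. all `2^n` states lie in a single orbit of its state map. -/
def generatesDB {n : ℕ} (ρ : (Fin n → F2) → F2) : Prop :=
  ∀ x y : Fin n → F2, ∃ k : ℕ, (nextMap ρ)^[k] x = y

def inOrbit {α : Type*} (σ : α → α) (v w : α) : Prop := ∃ k : ℕ, σ^[k] v = w

def orbit {α : Type*} (σ : α → α) (v : α) : Set α := {w | inOrbit σ v w}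

/-- `v` is the cycle representative (the lexicographically least state) of its orbit. -/
def isCycleRep {m : ℕ} (σ : (Fin m → F2) → (Fin m → F2)) (v : Fin m → F2) : Prop :=
  ∀ w ∈ orbit σ v, lexLe v w

/-- Hamming weight. -/
noncomputable def wt {m : ℕ} (u : Fin m → F2) : ℕ :=
  (Finset.univ.filter (fun j : Fin m => u j = 1)).card

/-- The operator `Λ`: cyclically shift a nonzero tuple so that its first `1`
moves to the end (identity on the zero tuple). -/
noncomputable def Lam {m : ℕ} (u : Fin m → F2) : Fin m → F2 :=
  if h : (Finset.univ.filter (fun j : Fin m => u j = 1)).Nonempty then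
    rot (((Finset.univ.filter (fun j : Fin m => u j = 1)).min' h).val + 1) u
  else u

/-- The operator `Θ`: if `j ≥ 1` is the least index (0-based) with `u j = 0`,
rotate left by `j`; fixes tuples with no such index. -/
noncomputable def Theta {m : ℕ} (u : Fin m → F2) : Fin m → F2 :=
  if h : (Finset.univ.filter (fun j : Fin m => 0 < (j : ℕ) ∧ u j = 0)).Nonempty then
    rot ((Finset.univ.filter (fun j : Fin m => 0 < (j : ℕ) ∧ u j = 0)).min' h).val u
  else u

/-- Conjugate state: first bit complemented. -/
def conjSt {n : ℕ} (v : Fin n → F2) : Fin n → F2 :=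
  fun i => if (i : ℕ) = 0 then v i + 1 else v i

/-- Companion state: last bit complemented. -/
def compSt {n : ℕ} (v : Fin n → F2) : Fin n → F2 :=
  fun i => if (i : ℕ) + 1 = n then v i + 1 else v i

/-- `(c_1,…,c_{n-1}, b)`. -/
def shiftIn {n : ℕ} (c : Fin n → F2) (b : F2) : Fin n → F2 :=
  fun i => if h : (i : ℕ) + 1 < n then c ⟨(i : ℕ) + 1, h⟩ else b

/-- `lcm(1,2,…,m)`. -/
def lcmUpTo (m : ℕ) : ℕ := (Finset.Icc 1 m).lcm id

/-- Admissible parameters `1 = k_1 < k_2 < … < k_t = n`, `k_{t-1} < n-1`, `2 ≤ t ≤ n-1`,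
for the rules `Ψ₁` and `Υ₁` (the values `k 1, …, k t` of `k : ℕ → ℕ`). -/
def validParams (n t : ℕ) (k : ℕ → ℕ) : Prop :=
  2 ≤ t ∧ t ≤ n - 1 ∧ k 1 = 1 ∧ k t = n ∧
  (∀ i : ℕ, 1 ≤ i → i < t → k i < k (i + 1)) ∧ k (t - 1) < n - 1

/-- The successor rule `Ψ₁` of Theorem 3.2. -/
noncomputable def Psi1Rule {n : ℕ} (t : ℕ) (k : ℕ → ℕ) (c : Fin n → F2) : F2 :=
  if (get c 1 = 0 ∧ IsCoNecklace (stTail c)) ∨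
     (get c 1 = 1 ∧ ∃ i : ℕ, 1 ≤ i ∧ i < t ∧ k i ≤ wt (stTail c) ∧
        wt (stTail c) < k (i + 1) ∧ IsNecklace (Lam^[k i] (stTail c)))
  then fPRR c + 1 else fPRR c

/-- The successor rule `Ψ₂` of Theorem 3.4. -/
noncomputable def Psi2Rule {n : ℕ} (k : ℕ) (c : Fin n → F2) : F2 :=
  if (get c 1 = 0 ∧ IsCoNecklace (stTail c)) ∨
     (get c 1 = 1 ∧ IsNecklace (Lam^[k] (stTail c)))
  then fPRR c + 1 else fPRR c

/-- `y_c = (c̄_1,…,c̄_{n-2}, 0) ∈ F₂^{n-1}`. -/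
noncomputable def yState {n : ℕ} (c : Fin n → F2) : Fin (n - 1) → F2 :=
  fun i => if (i : ℕ) < n - 2 then get c ((i : ℕ) + 1) + 1 else 0

/-- `w_c = (0, c_1,…,c_{n-2}) ∈ F₂^{n-1}`. -/
noncomputable def wState {n : ℕ} (c : Fin n → F2) : Fin (n - 1) → F2 :=
  fun i => if (i : ℕ) = 0 then 0 else get c (i : ℕ)

/-- The successor rule `Υ₁` of Theorem 4.2. -/
noncomputable def Ups1Rule {n : ℕ} (t : ℕ) (k : ℕ → ℕ) (c : Fin n → F2) : F2 :=
  if (get c (n - 1) = 1 ∧ IsCoNecklace (yState c)) ∨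
     (get c (n - 1) = 0 ∧ ∃ i : ℕ, 1 ≤ i ∧ i < t ∧
        k i ≤ wt (fun j => wState c j + 1) ∧ wt (fun j => wState c j + 1) < k (i + 1) ∧
        IsNecklace (Theta^[k i - 1] (wState c)))
  then fPRR c + 1 else fPRR c

/-- The successor rule `Υ₂` of Theorem 4.3. -/
noncomputable def Ups2Rule {n : ℕ} (k : ℕ) (c : Fin n → F2) : F2 :=
  if (get c (n - 1) = 1 ∧ IsCoNecklace (yState c)) ∨
     (get c (n - 1) = 0 ∧ IsNecklace (Theta^[k] (wState c)))
  then fPRR c + 1 else fPRR c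

/-- `x_c` of Theorem 4.1: `(0,c_1,…,c_{n-1})` if `c_{n-1}=0`,
and `(c̄_1,…,c̄_{n-2},0,c_1)` if `c_{n-1}=1`. -/
noncomputable def xState {n : ℕ} (c : Fin n → F2) : Fin n → F2 :=
  if get c (n - 1) = 0 then (fun i => if (i : ℕ) = 0 then 0 else c i)
  else fun i => if (i : ℕ) < n - 2 then get c ((i : ℕ) + 1) + 1
       else if (i : ℕ) = n - 2 then 0 else get c 1

/- ======================  AUXILIARY DEVELOPMENT  ====================== -/

namespace PRRAux

lemma F2cases (x : F2) : x = 0 ∨ x = 1 := by revert x; decide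

lemma F2add_one_ne (x : F2) : x + 1 ≠ x := by revert x; decide

lemma F2ne_iff {x y : F2} : x ≠ y ↔ x = y + 1 := by revert x y; decide

lemma F2val_le {x y : F2} : x.val ≤ y.val ↔ (x = y ∨ (x = 0 ∧ y = 1)) := by
  revert x y; decide

/-! ### numeric encoding of the lexicographic order -/

noncomputable def valv {m : ℕ} (v : Fin m → F2) : ℕ :=
  ∑ i : Fin m, (v i).val * 2 ^ (m - 1 - (i : ℕ))

lemma two_pow_sum (k : ℕ) : ∑ i ∈ Finset.range k, 2 ^ i = 2 ^ k - 1 := by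
  induction k with
  | zero => simp
  | succ k ih =>
    rw [Finset.sum_range_succ, ih]
    have : 1 ≤ 2 ^ k := Nat.one_le_two_pow
    have : 2 ^ (k + 1) = 2 ^ k + 2 ^ k := by ring
    omega

lemma valv_lt {m : ℕ} {v w : Fin m → F2} (j : Fin m)
    (hpre : ∀ i : Fin m, i < j → v i = w i) (hvj : v j = 0) (hwj : w j = 1) :
    valv v < valv w := by
  classical
  unfold valv
  rw [← Finset.sum_filter_add_sum_filter_not Finset.univ (fun i : Fin m => i < j),
      ← Finset.sum_filter_add_sum_filter_not Finset.univ (fun i : Fin m => i < j)]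
  have hfst : ∑ i ∈ Finset.univ.filter (fun i : Fin m => i < j),
        (v i).val * 2 ^ (m - 1 - (i : ℕ))
      = ∑ i ∈ Finset.univ.filter (fun i : Fin m => i < j),
        (w i).val * 2 ^ (m - 1 - (i : ℕ)) := by
    apply Finset.sum_congr rfl
    intro i hi
    rw [hpre i (Finset.mem_filter.mp hi).2]
  rw [hfst]
  have hkey : ∑ i ∈ Finset.univ.filter (fun i : Fin m => ¬ i < j),
        (v i).val * 2 ^ (m - 1 - (i : ℕ))
      < ∑ i ∈ Finset.univ.filter (fun i : Fin m => ¬ i < j),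
        (w i).val * 2 ^ (m - 1 - (i : ℕ)) := by
    -- RHS ≥ term at j alone = 2^(m-1-j); LHS ≤ sum over i > j of 2^(m-1-i) < 2^(m-1-j)
    have hjmem : j ∈ Finset.univ.filter (fun i : Fin m => ¬ i < j) := by
      simp
    have hR : 2 ^ (m - 1 - (j : ℕ)) ≤
        ∑ i ∈ Finset.univ.filter (fun i : Fin m => ¬ i < j),
          (w i).val * 2 ^ (m - 1 - (i : ℕ)) := by
      have := Finset.single_le_sum (f := fun i : Fin m => (w i).val * 2 ^ (m - 1 - (i : ℕ)))
        (fun i _ => Nat.zero_le _) hjmem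
      simpa [hwj, ZMod.val_one] using this
    have hL : ∑ i ∈ Finset.univ.filter (fun i : Fin m => ¬ i < j),
          (v i).val * 2 ^ (m - 1 - (i : ℕ)) < 2 ^ (m - 1 - (j : ℕ)) := by
      have hsplit : ∑ i ∈ Finset.univ.filter (fun i : Fin m => ¬ i < j),
            (v i).val * 2 ^ (m - 1 - (i : ℕ))
          = ∑ i ∈ Finset.univ.filter (fun i : Fin m => j < i),
            (v i).val * 2 ^ (m - 1 - (i : ℕ)) := by
        rw [← Finset.sum_filter_add_sum_filter_not
              (Finset.univ.filter (fun i : Fin m => ¬ i < j)) (fun i => i = j)]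
        have h1 : (Finset.univ.filter (fun i : Fin m => ¬ i < j)).filter (fun i => i = j)
            = {j} := by
          ext i
          simp only [Finset.mem_filter, Finset.mem_univ, true_and, Finset.mem_singleton]
          constructor
          · rintro ⟨-, h⟩; exact h
          · rintro rfl; exact ⟨lt_irrefl _, rfl⟩
        have h2 : (Finset.univ.filter (fun i : Fin m => ¬ i < j)).filter (fun i => ¬ i = j)
            = Finset.univ.filter (fun i : Fin m => j < i) := by
          ext i
          simp only [Finset.mem_filter, Finset.mem_univ, true_and]
          constructor
          · rintro ⟨h1', h2'⟩
            exact lt_of_le_of_ne (not_lt.mp h1') (fun h => h2' h.symm)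
          · intro h
            exact ⟨not_lt.mpr (le_of_lt h), fun he => absurd h (he ▸ lt_irrefl _)⟩
        rw [h1, h2]
        simp [hvj]
      rw [hsplit]
      have hinj : ∀ a ∈ Finset.univ.filter (fun i : Fin m => j < i),
          ∀ b ∈ Finset.univ.filter (fun i : Fin m => j < i),
          m - 1 - (a : ℕ) = m - 1 - (b : ℕ) → a = b := by
        intro a _ b _ hab
        have := a.isLt; have := b.isLt
        apply Fin.ext; omega
      have himg : ∑ i ∈ Finset.univ.filter (fun i : Fin m => j < i), 2 ^ (m - 1 - (i : ℕ))
          = ∑ k ∈ (Finset.univ.filter (fun i : Fin m => j < i)).image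
              (fun i : Fin m => m - 1 - (i : ℕ)), 2 ^ k :=
        (Finset.sum_image hinj).symm
      have hsub : (Finset.univ.filter (fun i : Fin m => j < i)).image
            (fun i : Fin m => m - 1 - (i : ℕ)) ⊆ Finset.range (m - 1 - (j : ℕ)) := by
        intro k hk
        simp only [Finset.mem_image, Finset.mem_filter, Finset.mem_univ, true_and] at hk
        obtain ⟨i, hij, rfl⟩ := hk
        have := i.isLt
        have hij' : (j : ℕ) < (i : ℕ) := hij
        simp only [Finset.mem_range]
        omega
      calc ∑ i ∈ Finset.univ.filter (fun i : Fin m => j < i),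
              (v i).val * 2 ^ (m - 1 - (i : ℕ))
          ≤ ∑ i ∈ Finset.univ.filter (fun i : Fin m => j < i), 2 ^ (m - 1 - (i : ℕ)) := by
            apply Finset.sum_le_sum
            intro i _
            have hv1 : (v i).val ≤ 1 := by
              rcases F2cases (v i) with h | h <;> simp [h, ZMod.val_one]
            calc (v i).val * 2 ^ (m - 1 - (i : ℕ)) ≤ 1 * 2 ^ (m - 1 - (i : ℕ)) :=
                  Nat.mul_le_mul_right _ hv1
              _ = 2 ^ (m - 1 - (i : ℕ)) := one_mul _
        _ = ∑ k ∈ (Finset.univ.filter (fun i : Fin m => j < i)).image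
              (fun i : Fin m => m - 1 - (i : ℕ)), 2 ^ k := himg
        _ ≤ ∑ k ∈ Finset.range (m - 1 - (j : ℕ)), 2 ^ k :=
            Finset.sum_le_sum_of_subset_of_nonneg hsub (fun _ _ _ => Nat.zero_le _)
        _ = 2 ^ (m - 1 - (j : ℕ)) - 1 := two_pow_sum _
        _ < 2 ^ (m - 1 - (j : ℕ)) := by
            have : 1 ≤ 2 ^ (m - 1 - (j : ℕ)) := Nat.one_le_two_pow
            omega
    omega
  omega


lemma firstdiff {m : ℕ} {v w : Fin m → F2} (hne : v ≠ w) :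
    ∃ j : Fin m, (∀ i : Fin m, i < j → v i = w i) ∧ v j ≠ w j := by
  classical
  have hne' : (Finset.univ.filter (fun i : Fin m => v i ≠ w i)).Nonempty := by
    by_contra h
    apply hne
    funext i
    by_contra hvi
    exact h ⟨i, by simp [hvi]⟩
  set j := (Finset.univ.filter (fun i : Fin m => v i ≠ w i)).min' hne' with hj
  refine ⟨j, ?_, ?_⟩
  · intro i hij
    by_contra hvi
    have : j ≤ i := Finset.min'_le _ _ (by simp [hvi])
    exact absurd hij (not_lt.mpr this)
  · have : j ∈ Finset.univ.filter (fun i : Fin m => v i ≠ w i) :=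
      (Finset.univ.filter (fun i : Fin m => v i ≠ w i)).min'_mem hne'
    simpa using this

lemma valv_inj {m : ℕ} {v w : Fin m → F2} (h : valv v = valv w) : v = w := by
  by_contra hne
  obtain ⟨j, hpre, hj⟩ := firstdiff hne
  rcases F2cases (v j) with h1 | h1 <;> rcases F2cases (w j) with h2 | h2
  · exact hj (h1.trans h2.symm)
  · exact absurd h (Nat.ne_of_lt (valv_lt j hpre h1 h2))
  · exact absurd h.symm (Nat.ne_of_lt (valv_lt j (fun i hi => (hpre i hi).symm) h2 h1))
  · exact hj (h1.trans h2.symm)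

lemma lexLe_iff {m : ℕ} {v w : Fin m → F2} : lexLe v w ↔ valv v ≤ valv w := by
  constructor
  · intro hle
    by_cases hvw : v = w
    · exact hvw ▸ le_rfl
    obtain ⟨j, hpre, hj⟩ := firstdiff hvw
    have hval := hle j hpre
    rcases F2cases (v j) with h1 | h1 <;> rcases F2cases (w j) with h2 | h2
    · exact absurd (h1.trans h2.symm) hj
    · exact le_of_lt (valv_lt j hpre h1 h2)
    · simp [h1, h2, ZMod.val_one] at hval
    · exact absurd (h1.trans h2.symm) hj
  · intro hval j hpre
    by_contra hcon
    have h1 : v j = 1 := by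
      rcases F2cases (v j) with h | h
      · simp [h] at hcon
      · exact h
    have h2 : w j = 0 := by
      rcases F2cases (w j) with h | h
      · exact h
      · simp [h1, h, ZMod.val_one] at hcon
    have := valv_lt j (fun i hi => (hpre i hi).symm) h2 h1
    omega

lemma lexLe_total {m : ℕ} (v w : Fin m → F2) : lexLe v w ∨ lexLe w v := by
  rcases le_total (valv v) (valv w) with h | h
  · exact Or.inl (lexLe_iff.mpr h)
  · exact Or.inr (lexLe_iff.mpr h)

/-! ### generic orbit machinery -/

section OrbitGeneric

variable {α : Type*} [Fintype α] [DecidableEq α] {f : α → α}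

set_option linter.unusedSectionVars false

lemma iterate_fixed_mul {x : α} {p : ℕ} (hp : f^[p] x = x) : ∀ t, f^[p * t] x = x := by
  intro t
  induction t with
  | zero => simp
  | succ t ih =>
    rw [Nat.mul_succ, Function.iterate_add_apply, hp, ih]

lemma exists_period (hf : Function.Injective f) (x : α) :
    ∃ p, 0 < p ∧ f^[p] x = x := by
  classical
  have hcard : Fintype.card α < Fintype.card (Fin (Fintype.card α + 1)) := by simp
  obtain ⟨i, j, hij, he⟩ := Fintype.exists_ne_map_eq_of_card_lt
    (fun k : Fin (Fintype.card α + 1) => f^[(k : ℕ)] x) hcard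
  rcases Nat.lt_or_ge (i : ℕ) (j : ℕ) with h | h
  · refine ⟨(j : ℕ) - (i : ℕ), by omega, ?_⟩
    have : f^[(i : ℕ)] (f^[(j : ℕ) - (i : ℕ)] x) = f^[(i : ℕ)] x := by
      rw [← Function.iterate_add_apply]
      have : (i : ℕ) + ((j : ℕ) - (i : ℕ)) = (j : ℕ) := by omega
      rw [this, he]
    exact hf.iterate (i : ℕ) this
  · have hji : (j : ℕ) < (i : ℕ) := by
      rcases Nat.lt_or_ge (j : ℕ) (i : ℕ) with h' | h'
      · exact h'
      · exact absurd (Fin.ext (le_antisymm h' h)) hij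
    refine ⟨(i : ℕ) - (j : ℕ), by omega, ?_⟩
    have : f^[(j : ℕ)] (f^[(i : ℕ) - (j : ℕ)] x) = f^[(j : ℕ)] x := by
      rw [← Function.iterate_add_apply]
      have : (j : ℕ) + ((i : ℕ) - (j : ℕ)) = (i : ℕ) := by omega
      rw [this, he.symm]
    exact hf.iterate (j : ℕ) this

lemma inOrbit_refl (x : α) : inOrbit f x x := ⟨0, rfl⟩

lemma inOrbit_step (x : α) : inOrbit f x (f x) := ⟨1, rfl⟩

lemma inOrbit_trans {x y z : α} (h1 : inOrbit f x y) (h2 : inOrbit f y z) :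
    inOrbit f x z := by
  obtain ⟨k, hk⟩ := h1
  obtain ⟨l, hl⟩ := h2
  exact ⟨l + k, by rw [Function.iterate_add_apply, hk, hl]⟩

lemma inOrbit_symm (hf : Function.Injective f) {x y : α} (h : inOrbit f x y) :
    inOrbit f y x := by
  obtain ⟨k, hk⟩ := h
  obtain ⟨p, hp, hfix⟩ := exists_period hf x
  refine ⟨p * (k + 1) - k, ?_⟩
  rw [← hk, ← Function.iterate_add_apply]
  have : p * (k + 1) - k + k = p * (k + 1) := by
    have : k ≤ p * (k + 1) := by nlinarith
    omega
  rw [this]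
  exact iterate_fixed_mul hfix (k + 1)

lemma orbit_eq_of_inOrbit (hf : Function.Injective f) {x y : α} (h : inOrbit f x y) :
    orbit f x = orbit f y := by
  ext z
  constructor
  · intro hz; exact inOrbit_trans (inOrbit_symm hf h) hz
  · intro hz; exact inOrbit_trans h hz

lemma orbit_self (x : α) : x ∈ orbit f x := inOrbit_refl x

end OrbitGeneric


/-! ### state map basics -/

section StateMap

variable {n : ℕ}

lemma get_lt {c : Fin n → F2} {j : ℕ} (h : j < n) : get c j = c ⟨j, h⟩ := dif_pos h

lemma funext_get {a b : Fin n → F2} (h : ∀ j, j < n → get a j = get b j) : a = b := by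
  funext i
  have := h (i : ℕ) i.isLt
  rwa [get_lt i.isLt, get_lt i.isLt] at this

lemma get_stTail {c : Fin n → F2} {j : ℕ} (h1 : 1 ≤ j) (h2 : j < n) :
    get c j = stTail c ⟨j - 1, by omega⟩ := by
  rw [get_lt h2]
  unfold stTail
  congr 1
  apply Fin.ext
  simp only [Fin.val_mk]
  omega

lemma stTail_get {c : Fin n → F2} (i : Fin (n - 1)) :
    stTail c i = get c ((i : ℕ) + 1) := by
  have h2 : (i : ℕ) + 1 < n := by have := i.isLt; omega
  rw [get_lt h2]; rfl

lemma nextMap_get {ρ : (Fin n → F2) → F2} {c : Fin n → F2} {i : ℕ} (h : i + 1 < n) :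
    get (nextMap ρ c) i = get c (i + 1) := by
  rw [get_lt (by omega : i < n), get_lt h]
  unfold nextMap
  rw [dif_pos h]

lemma nextMap_last {ρ : (Fin n → F2) → F2} {c : Fin n → F2} (hn : 0 < n) :
    get (nextMap ρ c) (n - 1) = ρ c := by
  rw [get_lt (by omega : n - 1 < n)]
  unfold nextMap
  rw [dif_neg (by simp only [Fin.val_mk]; omega)]

lemma stTail_nextMap {ρ : (Fin n → F2) → F2} {a b : Fin n → F2}
    (h : nextMap ρ a = nextMap ρ b) : stTail a = stTail b := by
  funext i
  have hi : (i : ℕ) + 1 < n := by have := i.isLt; omega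
  have : get (nextMap ρ a) (i : ℕ) = get (nextMap ρ b) (i : ℕ) := by rw [h]
  rw [nextMap_get hi, nextMap_get hi] at this
  rw [stTail_get, stTail_get]
  exact this

lemma eq_of_tail_head {a b : Fin n → F2} (ht : stTail a = stTail b)
    (h0 : get a 0 = get b 0) : a = b := by
  apply funext_get
  intro j hj
  rcases Nat.eq_zero_or_pos j with rfl | hj1
  · exact h0
  · rw [get_stTail hj1 hj, get_stTail hj1 hj, ht]

lemma F2_cancel_left {x y z : F2} (h : x + y = x + z) : y = z := by
  have hgen : ∀ a b c : F2, a + b = a + c → b = c := by decide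
  exact hgen x y z h

lemma fPRR_head {c : Fin n → F2} (hn : 3 ≤ n) :
    fPRR c + get c 0 = get c 1 + get c (n - 1) := by
  unfold fPRR
  have hxx : ∀ x : F2, x + x = 0 := by decide
  have : get c 0 + get c 1 + get c (n-1) + get c 0
      = (get c 0 + get c 0) + (get c 1 + get c (n-1)) := by ring
  rw [this, hxx, zero_add]

lemma nextMap_injective (hn : 3 ≤ n) {ρ : (Fin n → F2) → F2}
    (hρ : ∀ a b : Fin n → F2, stTail a = stTail b → ρ a + get a 0 = ρ b + get b 0) :
    Function.Injective (nextMap ρ) := by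
  intro a b hab
  have ht : stTail a = stTail b := stTail_nextMap hab
  have hlast : ρ a = ρ b := by
    have := congrArg (fun c => get c (n - 1)) hab
    simpa [nextMap_last (by omega : 0 < n)] using this
  have h0 : get a 0 = get b 0 := by
    have := hρ a b ht
    rw [hlast] at this
    exact F2_cancel_left this
  exact eq_of_tail_head ht h0

lemma fPRR_tail_head (hn : 3 ≤ n) (a b : Fin n → F2) (ht : stTail a = stTail b) :
    fPRR a + get a 0 = fPRR b + get b 0 := by
  rw [fPRR_head hn, fPRR_head hn]
  have h1 : get a 1 = get b 1 := by
    rw [get_stTail (le_refl 1) (by omega), get_stTail (le_refl 1) (by omega), ht]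
  have h2 : get a (n-1) = get b (n-1) := by
    rw [get_stTail (by omega) (by omega), get_stTail (by omega) (by omega), ht]
  rw [h1, h2]

lemma sig_injective (hn : 3 ≤ n) : Function.Injective (nextMap (n := n) fPRR) :=
  nextMap_injective hn (fPRR_tail_head hn)

/-! ### the coordinate sequence of an orbit -/

noncomputable def aseq (c : Fin n → F2) (j : ℕ) : F2 := get ((nextMap fPRR)^[j] c) 0

lemma aseq_window {c : Fin n → F2} : ∀ i p, i < n →
    get ((nextMap (n := n) fPRR)^[p] c) i = aseq c (p + i) := by
  intro i
  induction i with
  | zero => intro p _; rfl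
  | succ i ih =>
    intro p hi
    have step : get ((nextMap fPRR)^[p] c) (i + 1)
        = get ((nextMap fPRR)^[p + 1] c) i := by
      rw [Function.iterate_succ_apply', nextMap_get hi]
    rw [step, ih (p + 1) (by omega)]
    congr 1
    omega

lemma aseq_zero {c : Fin n → F2} {i : ℕ} (h : i < n) : get c i = aseq c i := by
  have := aseq_window (c := c) i 0 h
  simpa using this

/-! ### PCR / CCR classification -/

def isPCR (c : Fin n → F2) : Prop := get c 0 = get c (n - 1)

lemma isPCR_sig (hn : 3 ≤ n) (c : Fin n → F2) :
    isPCR (nextMap fPRR c) ↔ isPCR c := by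
  unfold isPCR
  rw [nextMap_get (by omega : 0 + 1 < n), nextMap_last (by omega : 0 < n)]
  unfold fPRR
  have : ∀ x y z : F2, (y = x + y + z ↔ x = z) := by decide
  simpa using this (get c 0) (get c 1) (get c (n-1))

lemma isPCR_iterate (hn : 3 ≤ n) (c : Fin n → F2) (k : ℕ) :
    isPCR ((nextMap (n := n) fPRR)^[k] c) ↔ isPCR c := by
  induction k with
  | zero => rfl
  | succ k ih => rw [Function.iterate_succ_apply', isPCR_sig hn, ih]

lemma isPCR_orbit (hn : 3 ≤ n) {c w : Fin n → F2}
    (h : w ∈ orbit (nextMap (n := n) fPRR) c) : isPCR w ↔ isPCR c := by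
  obtain ⟨k, hk⟩ := h
  rw [← hk, isPCR_iterate hn]

lemma notPCR_iff {c : Fin n → F2} : ¬ isPCR c ↔ get c 0 = get c (n - 1) + 1 := by
  unfold isPCR
  exact F2ne_iff

lemma aseq_compl (hn : 3 ≤ n) {c : Fin n → F2} (h : ¬ isPCR c) (j : ℕ) :
    aseq c (j + (n - 1)) = aseq c j + 1 := by
  have hw : ¬ isPCR ((nextMap (n := n) fPRR)^[j] c) := by
    rw [isPCR_iterate hn]; exact h
  have h1 := aseq_window (c := c) (n - 1) j (by omega)
  have h2 := notPCR_iff.mp hw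
  have h0 : get ((nextMap (n := n) fPRR)^[j] c) 0 = aseq c j := by
    simpa using aseq_window (c := c) 0 j (by omega)
  have hswap : ∀ x y : F2, x = y + 1 → y = x + 1 := by decide
  have h3 := hswap _ _ h2
  rw [← h1, h3, h0]

/-! ### the all-ones state -/

def topSt (n : ℕ) : Fin n → F2 := fun _ => 1

lemma get_top {j : ℕ} (hj : j < n) : get (topSt n) j = 1 := by
  rw [get_lt hj]; rfl

lemma sig_top (hn : 3 ≤ n) : nextMap fPRR (topSt n) = topSt n := by
  apply funext_get
  intro j hj
  rcases Nat.lt_or_ge j (n - 1) with h | h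
  · rw [nextMap_get (by omega)]
    rw [get_top (by omega), get_top hj]
  · have : j = n - 1 := by omega
    subst this
    rw [nextMap_last (by omega), get_top (by omega)]
    unfold fPRR
    rw [get_top (by omega), get_top (by omega), get_top (by omega)]
    decide

lemma iterate_top (hn : 3 ≤ n) (k : ℕ) :
    (nextMap (n := n) fPRR)^[k] (topSt n) = topSt n := by
  induction k with
  | zero => rfl
  | succ k ih => rw [Function.iterate_succ_apply', ih, sig_top hn]

lemma top_mem_orbit (hn : 3 ≤ n) [Fintype (Fin n → F2)] [DecidableEq (Fin n → F2)]
    {x : Fin n → F2} (h : topSt n ∈ orbit (nextMap (n := n) fPRR) x) : x = topSt n := by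
  have hsym := inOrbit_symm (sig_injective hn) h
  obtain ⟨k, hk⟩ := hsym
  rw [iterate_top hn] at hk
  exact hk.symm

lemma exists_zero_head (hn : 3 ≤ n) {v : Fin n → F2} (hne : v ≠ topSt n) :
    ∃ w ∈ orbit (nextMap (n := n) fPRR) v, get w 0 = 0 := by
  by_contra hcon
  push_neg at hcon
  apply hne
  apply funext_get
  intro j hj
  have hw : (nextMap (n := n) fPRR)^[j] v ∈ orbit (nextMap (n := n) fPRR) v := ⟨j, rfl⟩
  have h1 : get ((nextMap (n := n) fPRR)^[j] v) 0 ≠ 0 := hcon _ hw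
  have h2 : get ((nextMap (n := n) fPRR)^[j] v) 0 = 1 := by
    rcases F2cases (get ((nextMap (n := n) fPRR)^[j] v) 0) with h | h
    · exact absurd h h1
    · exact h
  have h3 : get v j = aseq v j := aseq_zero hj
  have h4 : aseq v j = 1 := by
    have := aseq_window (c := v) 0 j (by omega)
    simp only [Nat.add_zero] at this
    rw [← this, h2]
  rw [h3, h4]
  unfold topSt
  rw [get_lt hj]

/-! ### `xState` and `σ^[n]` -/

noncomputable def Wseq (c : Fin n → F2) (j : ℕ) : F2 :=
  if j < n then get c j else if j < 2 * n - 1 then get c (j - n + 1) + 1 else get c 1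

lemma sigpow_window (hn : 3 ≤ n) {c : Fin n → F2}
    (h0 : get c 0 = 0) (hl : get c (n - 1) = 1) :
    ∀ k, k ≤ n → ∀ i : ℕ, i < n → get ((nextMap (n := n) fPRR)^[k] c) i = Wseq c (k + i) := by
  intro k
  induction k with
  | zero =>
    intro _ i hi
    simp only [Function.iterate_zero, id_eq, Nat.zero_add]
    unfold Wseq
    rw [if_pos hi]
  | succ k ih =>
    intro hk i hi
    rcases Nat.lt_or_ge i (n - 1) with hilt | hige
    · rw [Function.iterate_succ_apply', nextMap_get (by omega)]
      rw [ih (by omega) (i + 1) (by omega)]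
      congr 1
      omega
    · have hieq : i = n - 1 := by omega
      subst hieq
      rw [Function.iterate_succ_apply', nextMap_last (by omega)]
      have hf : fPRR ((nextMap (n := n) fPRR)^[k] c)
          = get ((nextMap (n := n) fPRR)^[k] c) 0 + get ((nextMap (n := n) fPRR)^[k] c) 1
            + get ((nextMap (n := n) fPRR)^[k] c) (n - 1) := rfl
      rw [hf, ih (by omega) 0 (by omega), ih (by omega) 1 (by omega),
          ih (by omega) (n - 1) (by omega)]
      simp only [Nat.add_zero]
      -- goal : Wseq c k + Wseq c (k+1) + Wseq c (k + (n-1)) = Wseq c (k + 1 + (n-1))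
      have hWk : Wseq c k = get c k := by unfold Wseq; rw [if_pos (by omega)]
      rcases Nat.eq_zero_or_pos k with rfl | hk1
      · have hW1 : Wseq c 1 = get c 1 := by unfold Wseq; rw [if_pos (by omega)]
        have hWn1 : Wseq c (0 + (n - 1)) = get c (n - 1) := by
          unfold Wseq; rw [if_pos (by omega)]; congr 1; omega
        have hWn : Wseq c (0 + 1 + (n - 1)) = get c 1 + 1 := by
          unfold Wseq
          rw [if_neg (by omega), if_pos (by omega)]
          congr 2
          omega
        rw [hWk, hW1, hWn1, hWn, h0, hl]
        have : ∀ y : F2, 0 + y + 1 = y + 1 := by decide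
        exact this _
      · rcases Nat.lt_or_ge k (n - 1) with hk2 | hk2
        · -- 1 ≤ k ≤ n-2
          have hW1 : Wseq c (k + 1) = get c (k + 1) := by
            unfold Wseq; rw [if_pos (by omega)]
          have hWn1 : Wseq c (k + (n - 1)) = get c k + 1 := by
            unfold Wseq
            rw [if_neg (by omega), if_pos (by omega)]
            congr 2
            omega
          have hWn : Wseq c (k + 1 + (n - 1)) = get c (k + 1) + 1 := by
            unfold Wseq
            rw [if_neg (by omega), if_pos (by omega)]
            congr 2
            omega
          rw [hWk, hW1, hWn1, hWn]
          have : ∀ x y : F2, x + y + (x + 1) = y + 1 := by decide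
          exact this _ _
        · -- k = n-1
          have hkeq : k = n - 1 := by omega
          subst hkeq
          have hW1 : Wseq c (n - 1 + 1) = get c 1 + 1 := by
            unfold Wseq
            rw [if_neg (by omega), if_pos (by omega)]
            congr 2
            omega
          have hWn1 : Wseq c (n - 1 + (n - 1)) = get c (n - 1) + 1 := by
            unfold Wseq
            rw [if_neg (by omega), if_pos (by omega)]
            congr 2
            omega
          have hWn : Wseq c (n - 1 + 1 + (n - 1)) = get c 1 := by
            unfold Wseq
            rw [if_neg (by omega), if_neg (by omega)]
          rw [hWk, hW1, hWn1, hWn, hl]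
          have : ∀ y : F2, 1 + (y + 1) + (1 + 1) = y := by decide
          exact this _

lemma sigpow_n_eq_xState (hn : 3 ≤ n) {c : Fin n → F2}
    (h0 : get c 0 = 0) (hl : get c (n - 1) = 1) :
    (nextMap (n := n) fPRR)^[n] c = xState c := by
  apply funext_get
  intro j hj
  rw [sigpow_window hn h0 hl n (le_refl n) j hj]
  unfold xState
  rw [if_neg (by rw [hl]; decide)]
  rw [get_lt hj]
  simp only
  rcases Nat.lt_or_ge j (n - 2) with hj2 | hj2
  · rw [if_pos hj2]
    unfold Wseq
    rw [if_neg (by omega), if_pos (by omega)]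
    congr 2
    omega
  · rcases Nat.lt_or_ge j (n - 1) with hj3 | hj3
    · have : j = n - 2 := by omega
      rw [if_neg (by omega), if_pos this]
      unfold Wseq
      rw [if_neg (by omega), if_pos (by omega)]
      have : n + j - n + 1 = n - 1 := by omega
      rw [this, hl]
      decide
    · have hje : j = n - 1 := by omega
      rw [if_neg (by omega), if_neg (by omega)]
      unfold Wseq
      rw [if_neg (by omega), if_neg (by omega)]

lemma valv_lt_get {n : ℕ} {v w : Fin n → F2} {j : ℕ} (hj : j < n)
    (hpre : ∀ i, i < j → get v i = get w i) (hv : get v j = 0) (hw : get w j = 1) :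
    valv v < valv w := by
  apply valv_lt ⟨j, hj⟩
  · intro i hi
    have := hpre (i : ℕ) hi
    rwa [get_lt i.isLt, get_lt i.isLt] at this
  · rw [get_lt hj] at hv; exact hv
  · rw [get_lt hj] at hw; exact hw

lemma lexLe_head {n : ℕ} {v w : Fin n → F2} (h : lexLe v w) {j : ℕ} (hj : j < n)
    (hpre : ∀ i, i < j → get v i = get w i) :
    (get v j).val ≤ (get w j).val := by
  have hh := h ⟨j, hj⟩ (fun i hi => by
    have := hpre (i : ℕ) hi
    rwa [get_lt i.isLt, get_lt i.isLt] at this)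
  rw [get_lt hj, get_lt hj]
  exact hh

end StateMap

/-! ### cyclic words over `Fin m` -/

section Cyclic

variable {m : ℕ} [NeZero m]

open Fin.NatCast

noncomputable def crunsF (w : Fin m → F2) : ℕ :=
  ∑ i : Fin m, (if w i ≠ w (i + 1) then 1 else 0)

def hasArc (w : Fin m → F2) (l : ℕ) : Prop :=
  ∃ s : Fin m, ∀ k : ℕ, k < l → w (s + (k : Fin m)) = 1

lemma hasArc_zero (w : Fin m → F2) : hasArc w 0 :=
  ⟨0, fun k hk => absurd hk (Nat.not_lt_zero k)⟩

noncomputable def maxoF (w : Fin m → F2) : ℕ :=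
  ((Finset.range (m + 1)).filter (fun l => hasArc w l)).max'
    ⟨0, by simp [hasArc_zero]⟩

lemma maxoF_le (w : Fin m → F2) : maxoF w ≤ m := by
  unfold maxoF
  apply Finset.max'_le
  intro l hl
  simp only [Finset.mem_filter, Finset.mem_range] at hl
  omega

lemma le_maxoF {w : Fin m → F2} {l : ℕ} (hl : l ≤ m) (h : hasArc w l) : l ≤ maxoF w :=
  Finset.le_max' _ _ (by simp [Finset.mem_filter, Finset.mem_range, h]; omega)

lemma maxoF_le_of {w : Fin m → F2} {Z : ℕ} (h : ∀ l, hasArc w l → l ≤ Z) :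
    maxoF w ≤ Z := by
  apply Finset.max'_le
  intro l hl
  simp only [Finset.mem_filter, Finset.mem_range] at hl
  exact h l hl.2

lemma crunsF_le (w : Fin m → F2) : crunsF w ≤ m := by
  unfold crunsF
  calc ∑ i : Fin m, (if w i ≠ w (i + 1) then 1 else 0)
      ≤ ∑ _i : Fin m, 1 := Finset.sum_le_sum (fun i _ => by split <;> omega)
    _ = m := by simp

lemma crunsF_rot1 (w : Fin m → F2) : crunsF (fun i => w (i + 1)) = crunsF w := by
  unfold crunsF
  exact Equiv.sum_comp (Equiv.addRight (1 : Fin m))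
    (fun i => if w i ≠ w (i + 1) then 1 else 0)

lemma hasArc_rot1 (w : Fin m → F2) (l : ℕ) :
    hasArc (fun i => w (i + 1)) l ↔ hasArc w l := by
  constructor
  · rintro ⟨s, hs⟩
    refine ⟨s + 1, fun k hk => ?_⟩
    have := hs k hk
    simpa [add_assoc, add_comm, add_left_comm] using this
  · rintro ⟨s, hs⟩
    refine ⟨s - 1, fun k hk => ?_⟩
    have := hs k hk
    have heq : s - 1 + (k : Fin m) + 1 = s + (k : Fin m) := by rw [add_right_comm, sub_add_cancel]
    simpa [heq] using this

lemma maxoF_rot1 (w : Fin m → F2) : maxoF (fun i => w (i + 1)) = maxoF w := by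
  unfold maxoF
  congr 1
  apply Finset.filter_congr
  intro l _
  simp [hasArc_rot1]

end Cyclic

/-! ### the measure -/

section Measure

variable {n : ℕ} [NeZero (n - 1)]

noncomputable def Wsharp (n : ℕ) [NeZero (n - 1)] (w : Fin (n - 1) → F2) : ℕ :=
  n * crunsF w + (n - 1 - maxoF w)

lemma Wsharp_le (w : Fin (n - 1) → F2) : Wsharp n w ≤ n * (n - 1) + (n - 1) := by
  unfold Wsharp
  have h1 := crunsF_le w
  have : n * crunsF w ≤ n * (n - 1) := Nat.mul_le_mul_left n h1
  omega

lemma fPRR_PCR {c : Fin n → F2} (h : isPCR c) : fPRR c = get c 1 := by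
  unfold fPRR
  unfold isPCR at h
  rw [h]
  have : ∀ x y : F2, x + y + x = y := by decide
  exact this _ _

lemma stTail_sig_PCR (hn : 3 ≤ n) {x : Fin n → F2} (hx : isPCR x) :
    stTail (nextMap fPRR x) = fun i => stTail x (i + 1) := by
  funext i
  have him : (i : ℕ) < n - 1 := i.isLt
  have hval1 : ((1 : Fin (n - 1)) : ℕ) = 1 := by
    have : (1 : ℕ) < n - 1 := by omega
    simp [Fin.val_one', Nat.mod_eq_of_lt this]
  have hvadd : ((i + 1 : Fin (n - 1)) : ℕ) = ((i : ℕ) + 1) % (n - 1) := by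
    rw [Fin.val_add, hval1]
  rw [stTail_get, stTail_get]
  rcases Nat.lt_or_ge ((i : ℕ)) (n - 2) with h2 | h2
  · rw [nextMap_get (by omega)]
    have : ((i + 1 : Fin (n - 1)) : ℕ) = (i : ℕ) + 1 := by
      rw [hvadd, Nat.mod_eq_of_lt (by omega)]
    rw [this]
  · have hieq : (i : ℕ) = n - 2 := by omega
    have hlast : (i : ℕ) + 1 = n - 1 := by omega
    rw [hlast, nextMap_last (by omega), fPRR_PCR hx]
    have : ((i + 1 : Fin (n - 1)) : ℕ) = 0 := by
      rw [hvadd, hieq]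
      have : n - 2 + 1 = n - 1 := by omega
      rw [this, Nat.mod_self]
    rw [this]

lemma Wsharp_sig_PCR (hn : 3 ≤ n) {x : Fin n → F2} (hx : isPCR x) :
    Wsharp n (stTail (nextMap fPRR x)) = Wsharp n (stTail x) := by
  rw [stTail_sig_PCR hn hx]
  unfold Wsharp
  rw [crunsF_rot1, maxoF_rot1]

end Measure

/-! ### cycle representatives -/

section Rep

variable {n : ℕ}

lemma exists_rep (x : Fin n → F2) :
    ∃ r, r ∈ orbit (nextMap (n := n) fPRR) x ∧
      ∀ w ∈ orbit (nextMap (n := n) fPRR) x, valv r ≤ valv w := by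
  classical
  obtain ⟨r, hrmem, hrmin⟩ := Finset.exists_min_image
    (Finset.univ.filter (· ∈ orbit (nextMap (n := n) fPRR) x)) valv
    ⟨x, by simp [orbit_self]⟩
  simp only [Finset.mem_filter, Finset.mem_univ, true_and] at hrmem
  refine ⟨r, hrmem, fun w hw => hrmin w ?_⟩
  simp only [Finset.mem_filter, Finset.mem_univ, true_and]
  exact hw

noncomputable def repOf (x : Fin n → F2) : Fin n → F2 := (exists_rep x).choose

lemma repOf_spec (x : Fin n → F2) :
    repOf x ∈ orbit (nextMap (n := n) fPRR) x ∧
    ∀ w ∈ orbit (nextMap (n := n) fPRR) x, valv (repOf x) ≤ valv w :=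
  (exists_rep x).choose_spec

lemma repOf_mem (x : Fin n → F2) : repOf x ∈ orbit (nextMap (n := n) fPRR) x :=
  (repOf_spec x).1

lemma repOf_isCycleRep (hn : 3 ≤ n) (x : Fin n → F2) :
    isCycleRep (nextMap (n := n) fPRR) (repOf x) := by
  intro w hw
  rw [lexLe_iff]
  apply (repOf_spec x).2
  have horb : orbit (nextMap (n := n) fPRR) x = orbit (nextMap (n := n) fPRR) (repOf x) :=
    orbit_eq_of_inOrbit (sig_injective hn) (repOf_mem x)
  rw [horb]
  exact hw

lemma rep_unique (hn : 3 ≤ n) {x r : Fin n → F2}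
    (hrep : isCycleRep (nextMap (n := n) fPRR) r)
    (hmem : r ∈ orbit (nextMap (n := n) fPRR) x) : repOf x = r := by
  have horb : orbit (nextMap (n := n) fPRR) x = orbit (nextMap (n := n) fPRR) r :=
    orbit_eq_of_inOrbit (sig_injective hn) hmem
  have h1 : valv (repOf x) ≤ valv r := (repOf_spec x).2 r hmem
  have h2 : valv r ≤ valv (repOf x) := by
    rw [← lexLe_iff]
    apply hrep
    rw [← horb]
    exact repOf_mem x
  exact valv_inj (le_antisymm h1 h2)

lemma repOf_orbit (hn : 3 ≤ n) {x y : Fin n → F2}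
    (h : y ∈ orbit (nextMap (n := n) fPRR) x) : repOf y = repOf x := by
  apply rep_unique hn (repOf_isCycleRep hn x)
  have horb : orbit (nextMap (n := n) fPRR) y = orbit (nextMap (n := n) fPRR) x :=
    (orbit_eq_of_inOrbit (sig_injective hn) h).symm
  rw [horb]
  exact repOf_mem x

lemma repOf_sig (hn : 3 ≤ n) (x : Fin n → F2) :
    repOf (nextMap fPRR x) = repOf x :=
  repOf_orbit hn (inOrbit_step x)

end Rep

/-! ### the measure on states -/

section Mu

variable {n : ℕ} [NeZero (n - 1)]

noncomputable def pwordOf (r : Fin n → F2) : Fin (n - 1) → F2 :=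
  fun i => get r (i : ℕ) + 1

noncomputable def mu (x : Fin n → F2) : ℕ :=
  if isPCR x then 2 * Wsharp n (stTail x) else 2 * Wsharp n (pwordOf (repOf x)) + 1

lemma mu_PCR {x : Fin n → F2} (h : isPCR x) : mu x = 2 * Wsharp n (stTail x) := if_pos h

lemma mu_CCR {x : Fin n → F2} (h : ¬ isPCR x) :
    mu x = 2 * Wsharp n (pwordOf (repOf x)) + 1 := if_neg h

lemma mu_sig (hn : 3 ≤ n) (x : Fin n → F2) : mu (nextMap fPRR x) = mu x := by
  by_cases h : isPCR x
  · rw [mu_PCR ((isPCR_sig hn x).mpr h), mu_PCR h, Wsharp_sig_PCR hn h]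
  · rw [mu_CCR (fun hc => h ((isPCR_sig hn x).mp hc)), mu_CCR h, repOf_sig hn]

lemma mu_iterate (hn : 3 ≤ n) (x : Fin n → F2) (k : ℕ) :
    mu ((nextMap (n := n) fPRR)^[k] x) = mu x := by
  induction k with
  | zero => rfl
  | succ k ih => rw [Function.iterate_succ_apply', mu_sig hn, ih]

lemma mu_orbit (hn : 3 ≤ n) {x y : Fin n → F2}
    (h : y ∈ orbit (nextMap (n := n) fPRR) x) : mu y = mu x := by
  obtain ⟨k, hk⟩ := h
  rw [← hk, mu_iterate hn]

lemma mu_le (x : Fin n → F2) : mu x ≤ 2 * (n * (n - 1) + (n - 1)) + 1 := by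
  unfold mu
  split
  · have := Wsharp_le (n := n) (stTail x)
    omega
  · have := Wsharp_le (n := n) (pwordOf (repOf x))
    omega

end Mu

/-! ### shape of CCR cycle representatives -/

section Shape

variable {n : ℕ}

lemma rep_head_zero (hn : 3 ≤ n) {r : Fin n → F2}
    (hrep : isCycleRep (nextMap (n := n) fPRR) r) (hccr : ¬ isPCR r) :
    get r 0 = 0 := by
  by_contra h
  have h1 : get r 0 = 1 := by rcases F2cases (get r 0) with h' | h' <;> tauto
  have hall : ∀ w ∈ orbit (nextMap (n := n) fPRR) r, get w 0 = 1 := by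
    intro w hw
    by_contra hw0
    have hw1 : get w 0 = 0 := by rcases F2cases (get w 0) with h' | h' <;> tauto
    have hle := lexLe_head (hrep w hw) (show (0:ℕ) < n by omega) (fun i hi => absurd hi (by omega))
    rw [h1, hw1] at hle
    simp [ZMod.val_one] at hle
  have hones : ∀ j, j < n → get r j = 1 := by
    intro j hj
    have := hall ((nextMap (n := n) fPRR)^[j] r) ⟨j, rfl⟩
    have hz : get ((nextMap (n := n) fPRR)^[j] r) 0 = aseq r j := by
      simpa using aseq_window (c := r) 0 j (by omega)
    rw [hz] at this
    rw [aseq_zero hj, this]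
  apply hccr
  unfold isPCR
  rw [hones 0 (by omega), hones (n-1) (by omega)]

lemma rep_last_one (hn : 3 ≤ n) {r : Fin n → F2}
    (hrep : isCycleRep (nextMap (n := n) fPRR) r) (hccr : ¬ isPCR r) :
    get r (n - 1) = 1 := by
  have h0 := rep_head_zero hn hrep hccr
  have := notPCR_iff.mp hccr
  rw [h0] at this
  have : ∀ y : F2, (0 : F2) = y + 1 → y = 1 := by decide
  exact this _ ‹(0 : F2) = get r (n-1) + 1›

lemma rep_sndlast_zero (hn : 3 ≤ n) {r : Fin n → F2}
    (hrep : isCycleRep (nextMap (n := n) fPRR) r) (hccr : ¬ isPCR r) :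
    get r (n - 2) = 0 := by
  classical
  by_contra h
  have h1 : get r (n-2) = 1 := by rcases F2cases (get r (n-2)) with h' | h' <;> tauto
  have h0 := rep_head_zero hn hrep hccr
  have hlast := rep_last_one hn hrep hccr
  -- the predecessor state u
  obtain ⟨p, hp, hfix⟩ := exists_period (f := nextMap (n := n) fPRR) (sig_injective hn) r
  set u := (nextMap (n := n) fPRR)^[p - 1] r with hu
  have hsu : nextMap fPRR u = r := by
    have h2 : (nextMap (n := n) fPRR)^[p - 1 + 1] r
        = nextMap fPRR ((nextMap (n := n) fPRR)^[p - 1] r) :=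
      Function.iterate_succ_apply' _ _ _
    rw [hu, ← h2, show p - 1 + 1 = p by omega, hfix]
  have humem : u ∈ orbit (nextMap (n := n) fPRR) r := ⟨p - 1, rfl⟩
  have huccr : ¬ isPCR u := by
    intro hP
    apply hccr
    exact (isPCR_orbit hn humem).mp hP
  have hucoord : ∀ j, 1 ≤ j → j < n → get u j = get r (j - 1) := by
    intro j hj1 hj2
    have := nextMap_get (ρ := fPRR) (c := u) (i := j - 1) (by omega)
    rw [hsu] at this
    have hjj : j - 1 + 1 = j := by omega
    rw [hjj] at this
    exact this.symm
  have hu0 : get u 0 = 0 := by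
    have h := notPCR_iff.mp huccr
    have hun1 : get u (n - 1) = get r (n - 2) := by
      have := hucoord (n-1) (by omega) (by omega)
      have hee : n - 1 - 1 = n - 2 := by omega
      rw [hee] at this
      exact this
    rw [hun1, h1] at h
    rw [h]
    decide
  -- least index with r _ = 1
  have hex : ∃ j, j < n ∧ get r j = 1 := ⟨n - 1, by omega, hlast⟩
  have hZspec := Nat.find_spec hex
  set Z := Nat.find hex with hZdef
  obtain ⟨hZn, hZ1⟩ := hZspec
  have hZmin : ∀ i, i < Z → get r i = 0 := by
    intro i hi
    have := Nat.find_min hex hi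
    push_neg at this
    rcases Nat.lt_or_ge i n with h' | h'
    · rcases F2cases (get r i) with hh | hh
      · exact hh
      · exact absurd hh (this h')
    · omega
  have hZpos : 1 ≤ Z := by
    rcases Nat.eq_zero_or_pos Z with h' | h'
    · rw [h'] at hZ1; rw [h0] at hZ1; exact absurd hZ1 (by decide)
    · exact h'
  -- u is lexicographically smaller at index Z
  have hlt : valv u < valv r := by
    apply valv_lt_get hZn
    · intro i hi
      rcases Nat.eq_zero_or_pos i with h' | h'
      · rw [h', hu0, hZmin 0 (by omega)]
      · rw [hucoord i h' (by omega), hZmin _ (by omega), hZmin _ (by omega)]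
    · rw [hucoord Z hZpos hZn, hZmin (Z - 1) (by omega)]
    · exact hZ1
  have := hrep u humem
  rw [lexLe_iff] at this
  omega

end Shape

/-! ### run counts of windows -/

section Windows

variable {n : ℕ}

noncomputable def dbit (r : Fin n → F2) (j : ℕ) : ℕ :=
  if aseq r j ≠ aseq r (j + 1) then 1 else 0

noncomputable def Dsum (r : Fin n → F2) (q : ℕ) : ℕ :=
  ∑ i ∈ Finset.range (n - 1), dbit r (q + i)

lemma dbit_shift (hn : 3 ≤ n) {r : Fin n → F2} (hccr : ¬ isPCR r) (j : ℕ) :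
    dbit r (j + (n - 1)) = dbit r j := by
  unfold dbit
  rw [aseq_compl hn hccr j]
  have he : j + (n - 1) + 1 = (j + 1) + (n - 1) := by omega
  rw [he, aseq_compl hn hccr (j + 1)]
  by_cases hc : aseq r j = aseq r (j + 1)
  · rw [if_neg (by rw [hc]; exact fun hh => hh rfl), if_neg (by simpa using hc)]
  · rw [if_pos (fun hh => hc (add_right_cancel hh)), if_pos hc]

lemma Dsum_shift (hn : 3 ≤ n) {r : Fin n → F2} (hccr : ¬ isPCR r) (q : ℕ) :
    Dsum r (q + 1) = Dsum r q := by
  unfold Dsum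
  rw [show n - 1 = (n - 2) + 1 by omega,
      Finset.sum_range_succ (fun i => dbit r (q + 1 + i)) (n - 2),
      Finset.sum_range_succ' (fun i => dbit r (q + i)) (n - 2)]
  have hsum : ∑ i ∈ Finset.range (n - 2), dbit r (q + 1 + i)
      = ∑ i ∈ Finset.range (n - 2), dbit r (q + (i + 1)) := by
    apply Finset.sum_congr rfl
    intro i _
    congr 1
    omega
  rw [hsum, show q + 1 + (n - 2) = q + (n - 1) by omega, dbit_shift hn hccr q,
      Nat.add_zero]

lemma Dsum_const (hn : 3 ≤ n) {r : Fin n → F2} (hccr : ¬ isPCR r) (q : ℕ) :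
    Dsum r q = Dsum r 0 := by
  induction q with
  | zero => rfl
  | succ q ih => rw [Dsum_shift hn hccr, ih]

lemma cruns_window (hn : 3 ≤ n) [NeZero (n - 1)] {r : Fin n → F2} (hccr : ¬ isPCR r) (q : ℕ) :
    crunsF (fun i : Fin (n - 1) => aseq r (q + (i : ℕ)))
      + (if aseq r (q + (n - 2)) = aseq r q then 2 else 0)
      = Dsum r q + 1 := by
  set w : Fin (n - 1) → F2 := fun i => aseq r (q + (i : ℕ)) with hw
  set f : ℕ → ℕ := fun j =>
    if j < n - 2 then dbit r (q + j)
    else (if aseq r (q + (n - 2)) ≠ aseq r q then 1 else 0) with hf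
  have hterm : ∀ i : Fin (n - 1), (if w i ≠ w (i + 1) then 1 else 0) = f (i : ℕ) := by
    intro i
    have him := i.isLt
    have hvadd : ((i + 1 : Fin (n - 1)) : ℕ) = ((i : ℕ) + 1) % (n - 1) := by
      rw [Fin.val_add, Fin.val_one', Nat.mod_eq_of_lt (show 1 < n - 1 by omega)]
    rcases Nat.lt_or_ge (i : ℕ) (n - 2) with h2 | h2
    · have hv : ((i + 1 : Fin (n - 1)) : ℕ) = (i : ℕ) + 1 := by
        rw [hvadd, Nat.mod_eq_of_lt (by omega)]
      rw [hf]
      simp only [hw, hv, if_pos h2]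
      unfold dbit
      have : q + (i : ℕ) + 1 = q + ((i : ℕ) + 1) := by omega
      rw [this]
    · have hie : (i : ℕ) = n - 2 := by omega
      have hv : ((i + 1 : Fin (n - 1)) : ℕ) = 0 := by
        rw [hvadd, hie, show n - 2 + 1 = n - 1 by omega, Nat.mod_self]
      rw [hf]
      simp only [hw, hv, hie, if_neg (lt_irrefl (n - 2))]
      norm_num
  have hsum1 : crunsF w = ∑ j ∈ Finset.range (n - 1), f j := by
    unfold crunsF
    rw [Finset.sum_congr rfl (fun i _ => hterm i)]
    exact Fin.sum_univ_eq_sum_range f (n - 1)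
  have hsum2 : ∑ j ∈ Finset.range (n - 1), f j
      = (∑ j ∈ Finset.range (n - 2), dbit r (q + j))
        + (if aseq r (q + (n - 2)) ≠ aseq r q then 1 else 0) := by
    rw [show n - 1 = (n - 2) + 1 by omega, Finset.sum_range_succ]
    congr 1
    · apply Finset.sum_congr rfl
      intro i hi
      simp only [Finset.mem_range] at hi
      rw [hf]; simp only [if_pos hi]
    · rw [hf]; simp only [if_neg (lt_irrefl (n - 2))]
  have hsum3 : Dsum r q = (∑ j ∈ Finset.range (n - 2), dbit r (q + j)) + dbit r (q + (n - 2)) := by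
    unfold Dsum
    rw [show n - 1 = (n - 2) + 1 by omega, Finset.sum_range_succ]
  have hbd : dbit r (q + (n - 2)) = if aseq r (q + (n - 2)) ≠ aseq r q + 1 then 1 else 0 := by
    unfold dbit
    have : q + (n - 2) + 1 = q + (n - 1) := by omega
    rw [this, aseq_compl hn hccr q]
  rw [hsum1, hsum2, hsum3, hbd]
  by_cases hcase : aseq r (q + (n - 2)) = aseq r q
  · rw [if_neg (by rw [hcase]; simp), if_pos hcase,
       if_pos (by rw [hcase]; exact Ne.symm (F2add_one_ne _))]
    all_goals omega
  · have h2 : aseq r (q + (n - 2)) = aseq r q + 1 := F2ne_iff.mp hcase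
    rw [if_pos hcase, if_neg hcase, if_neg (show ¬(aseq r (q + (n - 2)) ≠ aseq r q + 1) by
      rw [h2]; simp)]
    all_goals omega

end Windows

/-! ### the key decrease lemma -/

section M2

variable {n : ℕ}

open Fin.NatCast

lemma val_add_cast {m : ℕ} [NeZero m] (s : Fin m) (k : ℕ) :
    (s + (k : Fin m)).val = ((s : ℕ) + k) % m := by
  rw [Fin.val_add, Fin.val_natCast]
  conv_rhs => rw [Nat.add_mod]
  rw [Nat.mod_eq_of_lt s.isLt]

lemma M2 (hn : 3 ≤ n) [NeZero (n - 1)] {x : Fin n → F2}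
    (hx0 : get x 0 = 1) (hxl : get x (n - 1) = 0) :
    Wsharp n (pwordOf (repOf x)) < Wsharp n (stTail x) := by
  classical
  have hccr_x : ¬ isPCR x := by unfold isPCR; rw [hx0, hxl]; decide
  set r := repOf x with hrdef
  have hrep : isCycleRep (nextMap (n := n) fPRR) r := repOf_isCycleRep hn x
  have hrmem : r ∈ orbit (nextMap (n := n) fPRR) x := repOf_mem x
  have hccr : ¬ isPCR r := fun h => hccr_x ((isPCR_orbit hn hrmem).mp h)
  have h0 := rep_head_zero hn hrep hccr
  have hlast := rep_last_one hn hrep hccr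
  have h2' := rep_sndlast_zero hn hrep hccr
  obtain ⟨p, hp⟩ : x ∈ orbit (nextMap (n := n) fPRR) r :=
    inOrbit_symm (sig_injective hn) hrmem
  -- window descriptions
  have hTail : stTail x = fun i : Fin (n - 1) => aseq r ((p + 1) + (i : ℕ)) := by
    funext i
    rw [stTail_get, ← hp, aseq_window _ _ (by have := i.isLt; omega)]
    congr 1
    omega
  have hPw : pwordOf r = fun i : Fin (n - 1) => aseq r ((n - 1) + (i : ℕ)) := by
    funext i
    unfold pwordOf
    rw [aseq_zero (show (i : ℕ) < n by have := i.isLt; omega)]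
    rw [show (n - 1) + (i : ℕ) = (i : ℕ) + (n - 1) by omega, aseq_compl hn hccr]
  -- run-count equations
  have hCW_T := cruns_window hn hccr (p + 1)
  have hCW_P := cruns_window hn hccr (n - 1)
  rw [← hTail] at hCW_T
  rw [← hPw] at hCW_P
  rw [Dsum_const hn hccr (p+1)] at hCW_T
  rw [Dsum_const hn hccr (n-1)] at hCW_P
  -- boundary values for the pword window
  have hbP1 : aseq r ((n - 1) + (n - 2)) = 1 := by
    rw [show (n - 1) + (n - 2) = (n - 2) + (n - 1) by omega, aseq_compl hn hccr,
        ← aseq_zero (show n - 2 < n by omega), h2']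
    decide
  have hbP2 : aseq r (n - 1) = 1 := by
    have := aseq_compl hn hccr 0
    rw [Nat.zero_add] at this
    rw [this, ← aseq_zero (show 0 < n by omega), h0]
    decide
  rw [if_pos (by rw [hbP1, hbP2])] at hCW_P
  -- boundary values for the tail window
  have hbT1 : aseq r ((p + 1) + (n - 2)) = 0 := by
    have : (p + 1) + (n - 2) = p + (n - 1) := by omega
    rw [this, ← aseq_window (c := r) (n-1) p (by omega), hp, hxl]
  have hbT2 : aseq r (p + 1) = get x 1 := by
    rw [← aseq_window (c := r) 1 p (by omega), hp]
  rcases F2cases (get x 1) with hx1 | hx1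
  · -- equal run-count case : get x 1 = 0
    rw [if_pos (by rw [hbT1, hbT2, hx1])] at hCW_T
    have hceq : crunsF (stTail x) = crunsF (pwordOf r) := by omega
    -- least index Z with r Z = 1
    have hex : ∃ j, j < n ∧ get r j = 1 := ⟨n - 1, by omega, hlast⟩
    have hZspec := Nat.find_spec hex
    set Z := Nat.find hex with hZdef
    obtain ⟨hZn, hZ1⟩ := hZspec
    have hZmin : ∀ i, i < Z → get r i = 0 := by
      intro i hi
      have := Nat.find_min hex hi
      push_neg at this
      rcases Nat.lt_or_ge i n with h' | h'
      · rcases F2cases (get r i) with hh | hh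
        · exact hh
        · exact absurd hh (this h')
      · omega
    have hZpos : 1 ≤ Z := by
      rcases Nat.eq_zero_or_pos Z with h' | h'
      · rw [h'] at hZ1; rw [h0] at hZ1; exact absurd hZ1 (by decide)
      · exact h'
    have hZle : Z ≤ n - 1 := Nat.find_min' hex ⟨by omega, hlast⟩
    have hZne : Z ≠ n - 2 := by
      intro h
      rw [h] at hZ1
      rw [h2'] at hZ1
      exact absurd hZ1 (by decide)
    -- claim A : every arc of ones in the tail has length ≤ min Z (n-3)
    have claimA : ∀ l, hasArc (stTail x) l → l ≤ Z ∧ l ≤ n - 3 := by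
      intro l harc
      rcases Nat.eq_zero_or_pos l with rfl | hl1
      · omega
      obtain ⟨s, hs⟩ := harc
      have hsv := s.isLt
      have hT0 : stTail x ⟨0, by omega⟩ = 0 := by
        have : stTail x ⟨0, by omega⟩ = get x 1 := by
          rw [stTail_get]
        rw [this, hx1]
      have hTlast : stTail x ⟨n - 2, by omega⟩ = 0 := by
        have : stTail x ⟨n - 2, by omega⟩ = get x (n - 1) := by
          rw [stTail_get]
          congr 1
          simp only [Fin.val_mk]
          omega
        rw [this, hxl]
      have hs1 : 1 ≤ (s : ℕ) := by
        by_contra hc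
        have hs0 : s = ⟨0, by omega⟩ := by apply Fin.ext; simp only [Fin.val_mk]; omega
        have := hs 0 hl1
        rw [Nat.cast_zero, add_zero, hs0, hT0] at this
        exact absurd this (by decide)
      -- no arc element sits at position n-2
      have hnw : (s : ℕ) + l ≤ n - 2 := by
        by_contra hc
        push_neg at hc
        set k' := (n - 2) - (s : ℕ) with hk'
        have hk'l : k' < l := by omega
        have := hs k' hk'l
        have hval : (s + (k' : Fin (n - 1))).val = n - 2 := by
          rw [val_add_cast]
          have : (s : ℕ) + k' = n - 2 := by omega
          rw [this, Nat.mod_eq_of_lt (by omega)]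
        have heq : s + (k' : Fin (n - 1)) = ⟨n - 2, by omega⟩ := Fin.ext hval
        rw [heq, hTlast] at this
        exact absurd this (by decide)
      have hln3 : l ≤ n - 3 := by omega
      -- transport the arc into the sequence and complement it
      have harc' : ∀ k, k < l → aseq r ((p + 1) + ((s : ℕ) + k)) = 1 := by
        intro k hk
        have := hs k hk
        simp only [hTail] at this
        rw [val_add_cast, Nat.mod_eq_of_lt (by omega)] at this
        exact this
      have hzeros : ∀ k, k < l →
          aseq r ((p + 1 + (s : ℕ) + (n - 1)) + k) = 0 := by
        intro k hk
        have h1 := aseq_compl hn hccr ((p + 1) + ((s : ℕ) + k))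
        rw [harc' k hk] at h1
        have : (p + 1) + ((s : ℕ) + k) + (n - 1) = (p + 1 + (s : ℕ) + (n - 1)) + k := by
          omega
        rw [this] at h1
        rw [h1]
        decide
      -- the witness state with l leading zeros
      set E := p + 1 + (s : ℕ) + (n - 1) with hE
      set y := (nextMap (n := n) fPRR)^[E] r with hy
      have hymem : y ∈ orbit (nextMap (n := n) fPRR) r := ⟨E, rfl⟩
      have hyzeros : ∀ k, k < l → get y k = 0 := by
        intro k hk
        rw [hy, aseq_window _ _ (by omega)]
        exact hzeros k hk
      constructor
      · -- l ≤ Z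
        by_contra hc
        push_neg at hc
        have hple := lexLe_head (hrep y hymem) hZn (fun i hi => by
          rw [hZmin i hi, hyzeros i (by omega)])
        rw [hZ1, hyzeros Z (by omega)] at hple
        simp [ZMod.val_one] at hple
      · exact hln3
    have hmaxT_Z : maxoF (stTail x) ≤ Z := maxoF_le_of (fun l hl => (claimA l hl).1)
    have hmaxT_n3 : maxoF (stTail x) ≤ n - 3 := maxoF_le_of (fun l hl => (claimA l hl).2)
    -- claim B : the pword has a long arc of ones
    have hmaxP : maxoF (stTail x) < maxoF (pwordOf r) := by
      rcases Nat.lt_or_ge Z (n - 1) with hZs | hZb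
      · -- Z ≤ n - 3
        have hZ3 : Z ≤ n - 3 := by omega
        have harcB : hasArc (pwordOf r) (Z + 1) := by
          refine ⟨⟨n - 2, by omega⟩, fun k hk => ?_⟩
          have hval : ((⟨n - 2, by omega⟩ + (k : Fin (n - 1)) : Fin (n - 1))).val
              = if k = 0 then n - 2 else k - 1 := by
            rw [val_add_cast]
            simp only [Fin.val_mk]
            rcases Nat.eq_zero_or_pos k with rfl | hk1
            · rw [if_pos rfl, Nat.add_zero, Nat.mod_eq_of_lt (by omega)]
            · rw [if_neg (by omega)]
              have h1 : n - 2 + k = (k - 1) + (n - 1) := by omega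
              rw [h1, Nat.add_mod_right, Nat.mod_eq_of_lt (by omega)]
          unfold pwordOf
          rw [hval]
          rcases Nat.eq_zero_or_pos k with rfl | hk1
          · rw [if_pos rfl, h2']; decide
          · rw [if_neg (by omega), hZmin (k - 1) (by omega)]; decide
        have := le_maxoF (by omega : Z + 1 ≤ n - 1) harcB
        omega
      · -- Z = n - 1 : the pword is all ones
        have harcB : hasArc (pwordOf r) (n - 1) := by
          refine ⟨⟨0, by omega⟩, fun k hk => ?_⟩
          have hval : ((⟨0, by omega⟩ + (k : Fin (n - 1)) : Fin (n - 1))).val = k := by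
            rw [val_add_cast]
            simp only [Fin.val_mk]
            rw [Nat.zero_add, Nat.mod_eq_of_lt (by omega)]
          unfold pwordOf
          rw [hval, hZmin k (by omega)]
          decide
        have := le_maxoF (by omega : n - 1 ≤ n - 1) harcB
        omega
    -- conclude in the equal-runs case
    unfold Wsharp
    have hmP := maxoF_le (pwordOf r)
    have hmT := maxoF_le (stTail x)
    rw [hceq]
    have hc1 : n * crunsF (pwordOf r) = n * crunsF (pwordOf r) := rfl
    omega
  · -- run count drops by two : get x 1 = 1
    rw [if_neg (by rw [hbT1, hbT2, hx1]; decide)] at hCW_T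
    have hceq : crunsF (stTail x) = crunsF (pwordOf r) + 2 := by omega
    unfold Wsharp
    rw [hceq]
    have hmP := maxoF_le (pwordOf r)
    have hmT := maxoF_le (stTail x)
    have hexp : n * (crunsF (pwordOf r) + 2) = n * crunsF (pwordOf r) + 2 * n := by ring
    rw [hexp]
    omega

end M2

/-! ### flip machinery for the rule Υ -/

section Flip

variable {n : ℕ}

noncomputable def Ups (sel : (Fin n → F2) → (Fin n → F2)) (c : Fin n → F2) : F2 :=
  if (get c (n - 1) = 0 ∧ xState c = sel (xState c)) ∨
     (get c (n - 1) = 1 ∧ isCycleRep (nextMap (n := n) fPRR) (xState c))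
  then fPRR c + 1 else fPRR c

def flipc (sel : (Fin n → F2) → (Fin n → F2)) (c : Fin n → F2) : Prop :=
  (get c (n - 1) = 0 ∧ xState c = sel (xState c)) ∨
  (get c (n - 1) = 1 ∧ isCycleRep (nextMap (n := n) fPRR) (xState c))

lemma Ups_pos {sel} {c : Fin n → F2} (h : flipc sel c) : Ups sel c = fPRR c + 1 := if_pos h

lemma Ups_neg {sel} {c : Fin n → F2} (h : ¬ flipc sel c) : Ups sel c = fPRR c := if_neg h

lemma get_of_stTail (hn : 3 ≤ n) {a b : Fin n → F2} (h : stTail a = stTail b) :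
    ∀ j, 1 ≤ j → j < n → get a j = get b j := by
  intro j h1 h2
  rw [get_stTail h1 h2, get_stTail h1 h2, h]

lemma stTail_ext (hn : 3 ≤ n) {a b : Fin n → F2}
    (h : ∀ j, 1 ≤ j → j < n → get a j = get b j) : stTail a = stTail b := by
  funext i
  rw [stTail_get, stTail_get]
  exact h _ (by omega) (by have := i.isLt; omega)

/-! coordinates of `xState` -/

lemma xState_vals0 (hn : 3 ≤ n) {c : Fin n → F2} (hl : get c (n - 1) = 0) :
    get (xState c) 0 = 0 ∧ ∀ j, 1 ≤ j → j < n → get (xState c) j = get c j := by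
  unfold xState
  rw [if_pos hl]
  constructor
  · rw [get_lt (show 0 < n by omega)]
    simp
  · intro j h1 h2
    rw [get_lt h2, get_lt h2]
    simp only [Fin.val_mk]
    rw [if_neg (by omega)]

lemma xState_vals1 (hn : 3 ≤ n) {c : Fin n → F2} (hl : get c (n - 1) = 1) :
    (∀ j, j < n - 2 → get (xState c) j = get c (j + 1) + 1) ∧
    get (xState c) (n - 2) = 0 ∧ get (xState c) (n - 1) = get c 1 := by
  unfold xState
  rw [if_neg (by rw [hl]; decide)]
  refine ⟨?_, ?_, ?_⟩
  · intro j hj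
    rw [get_lt (show j < n by omega)]
    simp only [Fin.val_mk]
    rw [if_pos hj]
  · rw [get_lt (show n - 2 < n by omega)]
    simp only [Fin.val_mk]
    rw [if_neg (by omega)]
    simp
  · rw [get_lt (show n - 1 < n by omega)]
    simp only [Fin.val_mk]
    rw [if_neg (by omega), if_neg (by omega)]

lemma xState_tail (hn : 3 ≤ n) {a b : Fin n → F2} (h : stTail a = stTail b) :
    xState a = xState b := by
  have hl : get a (n - 1) = get b (n - 1) := get_of_stTail hn h _ (by omega) (by omega)
  have h1 : get a 1 = get b 1 := get_of_stTail hn h _ (by omega) (by omega)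
  rcases F2cases (get b (n - 1)) with hb | hb
  · have ha : get a (n - 1) = 0 := by rw [hl, hb]
    obtain ⟨ha0, haj⟩ := xState_vals0 hn ha
    obtain ⟨hb0, hbj⟩ := xState_vals0 hn hb
    apply funext_get
    intro j hj
    rcases Nat.eq_zero_or_pos j with rfl | hjp
    · rw [ha0, hb0]
    · rw [haj j hjp hj, hbj j hjp hj, get_of_stTail hn h j hjp hj]
  · have ha : get a (n - 1) = 1 := by rw [hl, hb]
    obtain ⟨haj, ham, hal⟩ := xState_vals1 hn ha
    obtain ⟨hbj, hbm, hbl⟩ := xState_vals1 hn hb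
    apply funext_get
    intro j hj
    rcases Nat.lt_or_ge j (n - 2) with hj2 | hj2
    · rw [haj j hj2, hbj j hj2, get_of_stTail hn h (j + 1) (by omega) (by omega)]
    · rcases Nat.lt_or_ge j (n - 1) with hj3 | hj3
      · have : j = n - 2 := by omega
        subst this
        rw [ham, hbm]
      · have : j = n - 1 := by omega
        subst this
        rw [hal, hbl, h1]

lemma flipc_tail (hn : 3 ≤ n) {sel} {a b : Fin n → F2} (h : stTail a = stTail b) :
    flipc sel a ↔ flipc sel b := by
  unfold flipc
  rw [xState_tail hn h, get_of_stTail hn h (n - 1) (by omega) (by omega)]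

/-! the conjugate (`mate`) state -/

def mate (c : Fin n → F2) : Fin n → F2 :=
  fun i => if (i : ℕ) = 0 then c i + 1 else c i

lemma get_mate_zero (hn : 3 ≤ n) (c : Fin n → F2) : get (mate c) 0 = get c 0 + 1 := by
  rw [get_lt (show 0 < n by omega), get_lt (show 0 < n by omega)]
  unfold mate
  rw [if_pos rfl]

lemma get_mate_pos (hn : 3 ≤ n) (c : Fin n → F2) {j : ℕ} (h1 : 1 ≤ j) (h2 : j < n) :
    get (mate c) j = get c j := by
  rw [get_lt h2, get_lt h2]
  unfold mate
  simp only [Fin.val_mk]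
  rw [if_neg (by omega)]

lemma stTail_mate (hn : 3 ≤ n) (c : Fin n → F2) : stTail (mate c) = stTail c :=
  stTail_ext hn (fun j h1 h2 => get_mate_pos hn c h1 h2)

lemma mate_mate (hn : 3 ≤ n) (c : Fin n → F2) : mate (mate c) = c := by
  apply funext_get
  intro j hj
  rcases Nat.eq_zero_or_pos j with rfl | hjp
  · rw [get_mate_zero hn, get_mate_zero hn]
    have : ∀ x : F2, x + 1 + 1 = x := by decide
    exact this _
  · rw [get_mate_pos hn _ hjp hj, get_mate_pos hn _ hjp hj]

lemma fPRR_mate (hn : 3 ≤ n) (c : Fin n → F2) : fPRR (mate c) = fPRR c + 1 := by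
  unfold fPRR
  rw [get_mate_zero hn, get_mate_pos hn c (by omega : (1:ℕ) ≥ 1) (by omega),
      get_mate_pos hn c (by omega : (1:ℕ) ≤ n - 1) (by omega)]
  have : ∀ x y z : F2, x + 1 + y + z = x + y + z + 1 := by decide
  exact this _ _ _

lemma tau_not_flip (hn : 3 ≤ n) {sel} {c : Fin n → F2} (h : ¬ flipc sel c) :
    nextMap (Ups sel) c = nextMap fPRR c := by
  apply funext_get
  intro j hj
  rcases Nat.lt_or_ge j (n - 1) with h' | h'
  · rw [nextMap_get (by omega), nextMap_get (by omega)]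
  · have : j = n - 1 := by omega
    subst this
    rw [nextMap_last (by omega), nextMap_last (by omega), Ups_neg h]

lemma tau_flip (hn : 3 ≤ n) {sel} {c : Fin n → F2} (h : flipc sel c) :
    nextMap (Ups sel) c = nextMap fPRR (mate c) := by
  apply funext_get
  intro j hj
  rcases Nat.lt_or_ge j (n - 1) with h' | h'
  · rw [nextMap_get (by omega), nextMap_get (by omega),
        get_mate_pos hn c (by omega) (by omega)]
  · have : j = n - 1 := by omega
    subst this
    rw [nextMap_last (by omega), nextMap_last (by omega), Ups_pos h, fPRR_mate hn]

lemma tau_injective (hn : 3 ≤ n) (sel : (Fin n → F2) → (Fin n → F2)) : Function.Injective (nextMap (Ups sel)) := by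
  apply nextMap_injective hn
  intro a b ht
  have hbase := fPRR_tail_head hn a b ht
  have hflip : flipc sel a ↔ flipc sel b := flipc_tail hn ht
  by_cases hf : flipc sel a
  · rw [Ups_pos hf, Ups_pos (hflip.mp hf)]
    have : ∀ u v : F2, u + 1 + v = (u + v) + 1 := by decide
    rw [this, this, hbase]
  · rw [Ups_neg hf, Ups_neg (fun hb => hf (hflip.mpr hb))]
    exact hbase

/-! the exit state of a CCR cycle -/

noncomputable def estate (r : Fin n → F2) : Fin n → F2 :=
  fun i => if (i : ℕ) = 0 then 0 else get r ((i : ℕ) - 1) + 1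

lemma get_estate_zero (hn : 3 ≤ n) (r : Fin n → F2) : get (estate r) 0 = 0 := by
  rw [get_lt (show 0 < n by omega)]
  unfold estate
  rw [if_pos rfl]

lemma get_estate_pos (hn : 3 ≤ n) (r : Fin n → F2) {j : ℕ} (h1 : 1 ≤ j) (h2 : j < n) :
    get (estate r) j = get r (j - 1) + 1 := by
  rw [get_lt h2]
  unfold estate
  simp only [Fin.val_mk]
  rw [if_neg (by omega)]

lemma stTail_estate (hn : 3 ≤ n) (r : Fin n → F2) : stTail (estate r) = pwordOf r := by
  funext i
  have := i.isLt
  rw [stTail_get, get_estate_pos hn r (by omega) (by omega)]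
  unfold pwordOf
  norm_num

lemma estate_last (hn : 3 ≤ n) {r : Fin n → F2} (h2 : get r (n - 2) = 0) :
    get (estate r) (n - 1) = 1 := by
  rw [get_estate_pos hn r (by omega) (by omega), show n - 1 - 1 = n - 2 by omega, h2]
  decide

lemma xState_estate (hn : 3 ≤ n) {r : Fin n → F2} (h0 : get r 0 = 0)
    (hl : get r (n - 1) = 1) (h2 : get r (n - 2) = 0) :
    xState (estate r) = r := by
  have hel := estate_last hn h2
  obtain ⟨hv1, hv2, hv3⟩ := xState_vals1 hn hel
  apply funext_get
  intro j hj
  rcases Nat.lt_or_ge j (n - 2) with hj2 | hj2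
  · rw [hv1 j hj2, get_estate_pos hn r (by omega) (by omega)]
    have he : j + 1 - 1 = j := by omega
    rw [he]
    have : ∀ x : F2, x + 1 + 1 = x := by decide
    exact this _
  · rcases Nat.lt_or_ge j (n - 1) with hj3 | hj3
    · have : j = n - 2 := by omega
      subst this
      rw [hv2, h2]
    · have : j = n - 1 := by omega
      subst this
      rw [hv3, get_estate_pos hn r (by omega) (by omega), hl,
          show (1:ℕ) - 1 = 0 by omega, h0]
      decide

lemma sig_n_estate (hn : 3 ≤ n) {r : Fin n → F2} (h0 : get r 0 = 0)
    (hl : get r (n - 1) = 1) (h2 : get r (n - 2) = 0) :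
    (nextMap (n := n) fPRR)^[n] (estate r) = r := by
  rw [sigpow_n_eq_xState hn (get_estate_zero hn r) (estate_last hn h2),
      xState_estate hn h0 hl h2]

/-! special states -/

lemma xState_self (hn : 3 ≤ n) {s : Fin n → F2} (h0 : get s 0 = 0)
    (hl : get s (n - 1) = 0) : xState s = s := by
  obtain ⟨hv0, hvj⟩ := xState_vals0 hn hl
  apply funext_get
  intro j hj
  rcases Nat.eq_zero_or_pos j with rfl | hjp
  · rw [hv0, h0]
  · exact hvj j hjp hj

lemma xState_mate_of (hn : 3 ≤ n) {x : Fin n → F2} (h0 : get x 0 = 1)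
    (hl : get x (n - 1) = 0) : xState x = mate x := by
  obtain ⟨hv0, hvj⟩ := xState_vals0 hn hl
  apply funext_get
  intro j hj
  rcases Nat.eq_zero_or_pos j with rfl | hjp
  · rw [hv0, get_mate_zero hn, h0]; decide
  · rw [hvj j hjp hj, get_mate_pos hn x hjp hj]

end Flip

/-! ### the exit map and the main induction -/

section Main

variable {n : ℕ} [NeZero (n - 1)]

noncomputable def Est (sel : (Fin n → F2) → (Fin n → F2)) (x : Fin n → F2) : Fin n → F2 :=
  if isPCR x then sel x else estate (repOf x)

variable {sel : (Fin n → F2) → (Fin n → F2)}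

lemma Est_PCR {x : Fin n → F2} (h : isPCR x) : Est sel x = sel x := if_pos h

lemma Est_CCR {x : Fin n → F2} (h : ¬ isPCR x) : Est sel x = estate (repOf x) := if_neg h

lemma Est_sig (hn : 3 ≤ n)
    (hconst : ∀ v w, inOrbit (nextMap (n := n) fPRR) v w → sel v = sel w)
    (x : Fin n → F2) : Est sel (nextMap fPRR x) = Est sel x := by
  by_cases h : isPCR x
  · rw [Est_PCR ((isPCR_sig hn x).mpr h), Est_PCR h,
        (hconst x (nextMap fPRR x) (inOrbit_step x)).symm]
  · rw [Est_CCR (fun hc => h ((isPCR_sig hn x).mp hc)), Est_CCR h, repOf_sig hn]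

/-- shape facts about the representative of a CCR cycle -/
lemma rep_shape (hn : 3 ≤ n) {x : Fin n → F2} (hccr : ¬ isPCR x) :
    get (repOf x) 0 = 0 ∧ get (repOf x) (n - 1) = 1 ∧ get (repOf x) (n - 2) = 0 := by
  have hrep := repOf_isCycleRep hn x
  have hrmem := repOf_mem x
  have hccr_r : ¬ isPCR (repOf x) := fun h => hccr ((isPCR_orbit hn hrmem).mp h)
  exact ⟨rep_head_zero hn hrep hccr_r, rep_last_one hn hrep hccr_r,
    rep_sndlast_zero hn hrep hccr_r⟩

lemma estate_mem (hn : 3 ≤ n) {x : Fin n → F2} (hccr : ¬ isPCR x) :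
    estate (repOf x) ∈ orbit (nextMap (n := n) fPRR) x := by
  obtain ⟨h0, hl, h2⟩ := rep_shape hn hccr
  have h1 : inOrbit (nextMap (n := n) fPRR) (estate (repOf x)) (repOf x) :=
    ⟨n, sig_n_estate hn h0 hl h2⟩
  have h2' : estate (repOf x) ∈ orbit (nextMap (n := n) fPRR) (repOf x) :=
    inOrbit_symm (sig_injective hn) h1
  have horb : orbit (nextMap (n := n) fPRR) x = orbit (nextMap (n := n) fPRR) (repOf x) :=
    orbit_eq_of_inOrbit (sig_injective hn) (repOf_mem x)
  rw [horb]
  exact h2'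

lemma Est_mem (hn : 3 ≤ n)
    (hmem : ∀ v, sel v ∈ orbit (nextMap (n := n) fPRR) v)
    (x : Fin n → F2) : Est sel x ∈ orbit (nextMap (n := n) fPRR) x := by
  by_cases h : isPCR x
  · rw [Est_PCR h]; exact hmem x
  · rw [Est_CCR h]; exact estate_mem hn h

/-- the flip at the chosen PCR state -/
lemma exit_PCR (hn : 3 ≤ n)
    (hmem : ∀ v, sel v ∈ orbit (nextMap (n := n) fPRR) v)
    (hconst : ∀ v w, inOrbit (nextMap (n := n) fPRR) v w → sel v = sel w)
    (hval : ∀ v : Fin n → F2, v ≠ (fun _ => 1) →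
      (∀ w ∈ orbit (nextMap (n := n) fPRR) v, get w 0 = get w (n - 1)) →
      get (sel v) 0 = 0)
    {x : Fin n → F2} (hP : isPCR x) (hne : x ≠ topSt n) :
    flipc sel (sel x) ∧ isPCR (sel x) ∧ get (sel x) 0 = 0 ∧
    get (sel x) (n - 1) = 0 ∧ sel (sel x) = sel x := by
  have hPCRall : ∀ w ∈ orbit (nextMap (n := n) fPRR) x, get w 0 = get w (n - 1) :=
    fun w hw => (isPCR_orbit hn hw).mpr hP
  have h0 : get (sel x) 0 = 0 := hval x hne hPCRall
  have hmemS := hmem x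
  have hPS : isPCR (sel x) := (isPCR_orbit hn hmemS).mpr hP
  have hl : get (sel x) (n - 1) = 0 := by
    unfold isPCR at hPS
    rw [← hPS, h0]
  have hfix : sel (sel x) = sel x := (hconst x (sel x) hmemS).symm
  refine ⟨Or.inl ⟨hl, ?_⟩, hPS, h0, hl, hfix⟩
  rw [xState_self hn h0 hl]
  exact hfix.symm

/-- the flip at the exit state of a CCR cycle -/
lemma exit_CCR (hn : 3 ≤ n) {x : Fin n → F2} (hccr : ¬ isPCR x) :
    flipc sel (estate (repOf x)) := by
  obtain ⟨h0, hl, h2⟩ := rep_shape hn hccr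
  exact Or.inr ⟨estate_last hn h2, by
    rw [xState_estate hn h0 hl h2]
    exact repOf_isCycleRep hn x⟩

/-- measure decrease when crossing the PCR exit -/
lemma exit_dec_PCR (hn : 3 ≤ n)
    (hmem : ∀ v, sel v ∈ orbit (nextMap (n := n) fPRR) v)
    (hconst : ∀ v w, inOrbit (nextMap (n := n) fPRR) v w → sel v = sel w)
    (hval : ∀ v : Fin n → F2, v ≠ (fun _ => 1) →
      (∀ w ∈ orbit (nextMap (n := n) fPRR) v, get w 0 = get w (n - 1)) →
      get (sel v) 0 = 0)
    {x : Fin n → F2} (hP : isPCR x) (hne : x ≠ topSt n) :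
    mu (nextMap (Ups sel) (sel x)) < mu x := by
  obtain ⟨hflip, hPS, h0, hl, hfix⟩ := exit_PCR hn hmem hconst hval hP hne
  rw [tau_flip hn hflip, mu_sig hn]
  have hm0 : get (mate (sel x)) 0 = 1 := by
    rw [get_mate_zero hn, h0]; decide
  have hml : get (mate (sel x)) (n - 1) = 0 := by
    rw [get_mate_pos hn _ (by omega) (by omega), hl]
  have hccrm : ¬ isPCR (mate (sel x)) := by
    unfold isPCR
    rw [hm0, hml]
    decide
  have hM2 := M2 hn hm0 hml
  rw [stTail_mate hn] at hM2
  have hmux : mu x = 2 * Wsharp n (stTail (sel x)) := by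
    rw [← mu_PCR hPS]
    exact (mu_orbit hn (hmem x)).symm
  rw [mu_CCR hccrm, hmux]
  omega

/-- measure decrease when crossing the CCR exit -/
lemma exit_dec_CCR (hn : 3 ≤ n) {x : Fin n → F2} (hccr : ¬ isPCR x) :
    mu (nextMap (Ups sel) (estate (repOf x))) < mu x := by
  obtain ⟨h0, hl, h2⟩ := rep_shape hn hccr
  rw [tau_flip hn (exit_CCR hn hccr), mu_sig hn]
  have hm0 : get (mate (estate (repOf x))) 0 = 1 := by
    rw [get_mate_zero hn, get_estate_zero hn]; decide
  have hml : get (mate (estate (repOf x))) (n - 1) = 1 := by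
    rw [get_mate_pos hn _ (by omega) (by omega), estate_last hn h2]
  have hPm : isPCR (mate (estate (repOf x))) := by
    unfold isPCR
    rw [hm0, hml]
  rw [mu_PCR hPm, stTail_mate hn, stTail_estate hn, mu_CCR hccr]
  omega

end Main

/-! ### the joining induction -/

section Induction

variable {n : ℕ} [NeZero (n - 1)]
variable {sel : (Fin n → F2) → (Fin n → F2)}

lemma claimE (hn : 3 ≤ n)
    (hmem : ∀ v, sel v ∈ orbit (nextMap (n := n) fPRR) v)
    (hconst : ∀ v w, inOrbit (nextMap (n := n) fPRR) v w → sel v = sel w) :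
    ∀ x : Fin n → F2, inOrbit (nextMap (Ups sel)) x (Est sel x) := by
  set K := 2 * (n * (n - 1) + (n - 1)) + 2 with hK
  have hmuK : ∀ z : Fin n → F2, mu z ≤ K - 1 := by
    intro z
    have := mu_le (n := n) z
    omega
  suffices H : ∀ m, ∀ x : Fin n → F2, K - mu x < m →
      inOrbit (nextMap (Ups sel)) x (Est sel x) by
    exact fun x => H (K + 1) x (by omega)
  intro m
  induction m with
  | zero => intro x hx; omega
  | succ m ih =>
    suffices Hin : ∀ d, ∀ x : Fin n → F2, K - mu x < m + 1 →
        (nextMap (n := n) fPRR)^[d] x = Est sel x →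
        inOrbit (nextMap (Ups sel)) x (Est sel x) by
      intro x hx
      obtain ⟨d, hd⟩ := Est_mem hn hmem x
      exact Hin d x hx hd
    intro d
    induction d with
    | zero =>
      intro x _ hd
      simp only [Function.iterate_zero, id_eq] at hd
      rw [← hd]
      exact inOrbit_refl x
    | succ d ihd =>
      intro x hx hd
      by_cases hflip : flipc sel x
      · rcases F2cases (get x 0) with hx0 | hx0 <;>
          rcases F2cases (get x (n - 1)) with hxl | hxl
        · -- (0,0) : x is the chosen PCR state itself
          have hXX : xState x = sel (xState x) := by
            rcases hflip with ⟨_, hXX⟩ | ⟨h1, _⟩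
            · exact hXX
            · rw [hxl] at h1; exact absurd h1 (by decide)
          have hPx : isPCR x := by unfold isPCR; rw [hx0, hxl]
          rw [xState_self hn hx0 hxl] at hXX
          have : x = Est sel x := by rw [Est_PCR hPx, ← hXX]
          rw [← this]
          exact inOrbit_refl x
        · -- (0,1) : x is the CCR exit state itself
          have hrep' : isCycleRep (nextMap (n := n) fPRR) (xState x) := by
            rcases hflip with ⟨h1, _⟩ | ⟨_, hr⟩
            · rw [hxl] at h1; exact absurd h1 (by decide)
            · exact hr
          have hccrx : ¬ isPCR x := by
            unfold isPCR; rw [hx0, hxl]; decide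
          have hsig : (nextMap (n := n) fPRR)^[n] x = xState x :=
            sigpow_n_eq_xState hn hx0 hxl
          have hrx : repOf x = xState x := rep_unique hn hrep' ⟨n, hsig⟩
          obtain ⟨hv1, hv2, hv3⟩ := xState_vals1 hn hxl
          have hxeq : x = Est sel x := by
            rw [Est_CCR hccrx, hrx]
            apply funext_get
            intro j hj
            rcases Nat.eq_zero_or_pos j with rfl | hjp
            · rw [get_estate_zero hn, hx0]
            · rcases Nat.lt_or_ge j (n - 1) with hj2 | hj2
              · rw [get_estate_pos hn _ hjp hj, hv1 (j - 1) (by omega),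
                    show j - 1 + 1 = j by omega]
                have : ∀ a : F2, a = a + 1 + 1 := by decide
                exact this _
              · have hje : j = n - 1 := by omega
                subst hje
                rw [get_estate_pos hn _ hjp hj, show n - 1 - 1 = n - 2 by omega, hv2, hxl]
                decide
          rw [← hxeq]
          exact inOrbit_refl x
        · -- (1,0) : cross into the child PCR cycle and come back
          have hXX : xState x = sel (xState x) := by
            rcases hflip with ⟨_, hXX⟩ | ⟨h1, _⟩
            · exact hXX
            · rw [hxl] at h1; exact absurd h1 (by decide)
          have hccrx : ¬ isPCR x := by
            unfold isPCR; rw [hx0, hxl]; decide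
          have hxm : xState x = mate x := xState_mate_of hn hx0 hxl
          have hmfix : mate x = sel (mate x) := by rw [← hxm]; exact hXX
          have hm0 : get (mate x) 0 = 0 := by
            rw [get_mate_zero hn, hx0]; decide
          have hml : get (mate x) (n - 1) = 0 := by
            rw [get_mate_pos hn _ (by omega) (by omega), hxl]
          have hPm : isPCR (mate x) := by unfold isPCR; rw [hm0, hml]
          have hmugt : mu x < mu (mate x) := by
            have hM2 := M2 hn hx0 hxl
            rw [mu_CCR hccrx, mu_PCR hPm, stTail_mate hn]
            omega
          have hτx : nextMap (Ups sel) x = nextMap fPRR (mate x) := tau_flip hn hflip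
          have hA : inOrbit (nextMap (Ups sel)) x (nextMap fPRR (mate x)) :=
            ⟨1, by rw [Function.iterate_one]; exact hτx⟩
          have hmuy : mu (nextMap fPRR (mate x)) = mu (mate x) := mu_sig hn (mate x)
          have hIH : inOrbit (nextMap (Ups sel)) (nextMap fPRR (mate x))
              (Est sel (nextMap fPRR (mate x))) := by
            apply ih
            have := hmuK x
            omega
          have hEsty : Est sel (nextMap fPRR (mate x)) = mate x := by
            rw [Est_sig hn hconst, Est_PCR hPm, ← hmfix]
          rw [hEsty] at hIH
          have hflipm : flipc sel (mate x) := (flipc_tail hn (stTail_mate hn x)).mpr hflip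
          have hC : inOrbit (nextMap (Ups sel)) (mate x) (nextMap fPRR x) :=
            ⟨1, by rw [Function.iterate_one, tau_flip hn hflipm, mate_mate hn]⟩
          have hD : inOrbit (nextMap (Ups sel)) (nextMap fPRR x)
              (Est sel (nextMap fPRR x)) := by
            apply ihd
            · rw [mu_sig hn]; exact hx
            · rw [Est_sig hn hconst, ← Function.iterate_succ_apply]
              exact hd
          rw [Est_sig hn hconst] at hD
          exact inOrbit_trans hA (inOrbit_trans hIH (inOrbit_trans hC hD))
        · -- (1,1) : cross into the child CCR cycle and come back
          have hrep' : isCycleRep (nextMap (n := n) fPRR) (xState x) := by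
            rcases hflip with ⟨h1, _⟩ | ⟨_, hr⟩
            · rw [hxl] at h1; exact absurd h1 (by decide)
            · exact hr
          have hPx : isPCR x := by unfold isPCR; rw [hx0, hxl]
          have hxd0 : get (mate x) 0 = 0 := by
            rw [get_mate_zero hn, hx0]; decide
          have hxdl : get (mate x) (n - 1) = 1 := by
            rw [get_mate_pos hn _ (by omega) (by omega), hxl]
          have hXeq : xState (mate x) = xState x := xState_tail hn (stTail_mate hn x)
          have hsig : (nextMap (n := n) fPRR)^[n] (mate x) = xState x := by
            rw [sigpow_n_eq_xState hn hxd0 hxdl, hXeq]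
          have hccrxd : ¬ isPCR (mate x) := by
            unfold isPCR; rw [hxd0, hxdl]; decide
          have hrxd : repOf (mate x) = xState x := rep_unique hn hrep' ⟨n, hsig⟩
          obtain ⟨hv1, hv2, hv3⟩ := xState_vals1 hn hxl
          have hpw : pwordOf (xState x) = stTail x := by
            funext i
            have hilt := i.isLt
            unfold pwordOf
            rw [stTail_get]
            rcases Nat.lt_or_ge (i : ℕ) (n - 2) with hi2 | hi2
            · rw [hv1 _ hi2]
              have : ∀ a : F2, a + 1 + 1 = a := by decide
              exact this _
            · have hie : (i : ℕ) = n - 2 := by omega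
              rw [hie, hv2, show n - 2 + 1 = n - 1 by omega, hxl]
              decide
          have hmuxd : mu (mate x) = mu x + 1 := by
            rw [mu_CCR hccrxd, hrxd, hpw, mu_PCR hPx]
          have hτx : nextMap (Ups sel) x = nextMap fPRR (mate x) := tau_flip hn hflip
          have hA : inOrbit (nextMap (Ups sel)) x (nextMap fPRR (mate x)) :=
            ⟨1, by rw [Function.iterate_one]; exact hτx⟩
          have hIH : inOrbit (nextMap (Ups sel)) (nextMap fPRR (mate x))
              (Est sel (nextMap fPRR (mate x))) := by
            apply ih
            have h1 := hmuK x
            have h2 := mu_sig hn (mate x)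
            omega
          have hEsty : Est sel (nextMap fPRR (mate x)) = mate x := by
            rw [Est_sig hn hconst, Est_CCR hccrxd, hrxd]
            obtain ⟨h0', hl', h2'⟩ : get (xState x) 0 = 0 ∧ get (xState x) (n-1) = 1 ∧
                get (xState x) (n-2) = 0 := by
              have hccr' : ¬ isPCR (xState x) := by
                rw [← hrxd]
                intro hPc
                exact hccrxd ((isPCR_orbit hn (hrxd ▸ repOf_mem (mate x))).mp hPc)
              exact ⟨rep_head_zero hn hrep' hccr', rep_last_one hn hrep' hccr',
                rep_sndlast_zero hn hrep' hccr'⟩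
            apply funext_get
            intro j hj
            rcases Nat.eq_zero_or_pos j with rfl | hjp
            · rw [get_estate_zero hn, get_mate_zero hn, hx0]; decide
            · rcases Nat.lt_or_ge j (n - 1) with hj2 | hj2
              · rw [get_estate_pos hn _ hjp hj, get_mate_pos hn _ hjp hj,
                    hv1 (j - 1) (by omega), show j - 1 + 1 = j by omega]
                have : ∀ a : F2, a + 1 + 1 = a := by decide
                exact this _
              · have hje : j = n - 1 := by omega
                subst hje
                rw [get_estate_pos hn _ hjp hj, show n - 1 - 1 = n - 2 by omega, hv2,
                    get_mate_pos hn _ hjp hj, hxl]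
                decide
          rw [hEsty] at hIH
          have hflipm : flipc sel (mate x) := (flipc_tail hn (stTail_mate hn x)).mpr hflip
          have hC : inOrbit (nextMap (Ups sel)) (mate x) (nextMap fPRR x) :=
            ⟨1, by rw [Function.iterate_one, tau_flip hn hflipm, mate_mate hn]⟩
          have hD : inOrbit (nextMap (Ups sel)) (nextMap fPRR x)
              (Est sel (nextMap fPRR x)) := by
            apply ihd
            · rw [mu_sig hn]; exact hx
            · rw [Est_sig hn hconst, ← Function.iterate_succ_apply]
              exact hd
          rw [Est_sig hn hconst] at hD
          exact inOrbit_trans hA (inOrbit_trans hIH (inOrbit_trans hC hD))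
      · -- no flip : just follow the register
        have hτx : nextMap (Ups sel) x = nextMap fPRR x := tau_not_flip hn hflip
        have hA : inOrbit (nextMap (Ups sel)) x (nextMap fPRR x) :=
          ⟨1, by rw [Function.iterate_one]; exact hτx⟩
        have hD : inOrbit (nextMap (Ups sel)) (nextMap fPRR x)
            (Est sel (nextMap fPRR x)) := by
          apply ihd
          · rw [mu_sig hn]; exact hx
          · rw [Est_sig hn hconst, ← Function.iterate_succ_apply]
            exact hd
        rw [Est_sig hn hconst] at hD
        exact inOrbit_trans hA hD

lemma reach_top (hn : 3 ≤ n)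
    (hmem : ∀ v, sel v ∈ orbit (nextMap (n := n) fPRR) v)
    (hconst : ∀ v w, inOrbit (nextMap (n := n) fPRR) v w → sel v = sel w)
    (hval : ∀ v : Fin n → F2, v ≠ (fun _ => 1) →
      (∀ w ∈ orbit (nextMap (n := n) fPRR) v, get w 0 = get w (n - 1)) →
      get (sel v) 0 = 0) :
    ∀ x : Fin n → F2, inOrbit (nextMap (Ups sel)) x (topSt n) := by
  suffices H : ∀ m, ∀ x : Fin n → F2, mu x < m →
      inOrbit (nextMap (Ups sel)) x (topSt n) by
    exact fun x => H (mu x + 1) x (by omega)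
  intro m
  induction m with
  | zero => intro x hx; omega
  | succ m ih =>
    intro x hx
    by_cases hxt : x = topSt n
    · rw [hxt]; exact inOrbit_refl _
    · have hE : inOrbit (nextMap (Ups sel)) x (Est sel x) := claimE hn hmem hconst x
      by_cases hP : isPCR x
      · have hdec := exit_dec_PCR hn hmem hconst hval hP hxt
        have hB : inOrbit (nextMap (Ups sel)) (Est sel x)
            (nextMap (Ups sel) (sel x)) := by
          rw [Est_PCR hP]
          exact ⟨1, by rw [Function.iterate_one]⟩
        have hC : inOrbit (nextMap (Ups sel)) (nextMap (Ups sel) (sel x)) (topSt n) := by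
          apply ih
          omega
        exact inOrbit_trans hE (inOrbit_trans hB hC)
      · have hdec := exit_dec_CCR (sel := sel) hn hP
        have hB : inOrbit (nextMap (Ups sel)) (Est sel x)
            (nextMap (Ups sel) (estate (repOf x))) := by
          rw [Est_CCR hP]
          exact ⟨1, by rw [Function.iterate_one]⟩
        have hC : inOrbit (nextMap (Ups sel)) (nextMap (Ups sel) (estate (repOf x)))
            (topSt n) := by
          apply ih
          omega
        exact inOrbit_trans hE (inOrbit_trans hB hC)

lemma main_db (hn : 3 ≤ n)
    (hmem : ∀ v, sel v ∈ orbit (nextMap (n := n) fPRR) v)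
    (hconst : ∀ v w, inOrbit (nextMap (n := n) fPRR) v w → sel v = sel w)
    (hval : ∀ v : Fin n → F2, v ≠ (fun _ => 1) →
      (∀ w ∈ orbit (nextMap (n := n) fPRR) v, get w 0 = get w (n - 1)) →
      get (sel v) 0 = 0) :
    generatesDB (Ups sel) := by
  intro x y
  have hx := reach_top hn hmem hconst hval x
  have hy := reach_top hn hmem hconst hval y
  exact inOrbit_trans hx (inOrbit_symm (tau_injective hn sel) hy)

end Induction

end PRRAux
/-- the generic successor rule `Υ` (Theorem 4.1). Every PCR-type cycle other
than `{(1,…,1)}` contains a state whose first coordinate is `0`; for every choice `sel` of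
such states (one per cycle) the rule generates a de Bruijn sequence. -/
theorem generic_rule_Ups (n : ℕ) (hn : 3 ≤ n)
    (sel : (Fin n → F2) → (Fin n → F2))
    (hmem : ∀ v, sel v ∈ orbit (nextMap (n := n) fPRR) v)
    (hconst : ∀ v w, inOrbit (nextMap (n := n) fPRR) v w → sel v = sel w)
    (hval : ∀ v : Fin n → F2, v ≠ (fun _ => 1) →
      (∀ w ∈ orbit (nextMap (n := n) fPRR) v, get w 0 = get w (n - 1)) →
      get (sel v) 0 = 0) :
    (∀ v : Fin n → F2, v ≠ (fun _ => 1) →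
      (∀ w ∈ orbit (nextMap (n := n) fPRR) v, get w 0 = get w (n - 1)) →
      ∃ w ∈ orbit (nextMap (n := n) fPRR) v, get w 0 = 0) ∧
    generatesDB (fun c : Fin n → F2 =>
      if (get c (n - 1) = 0 ∧ xState c = sel (xState c)) ∨
         (get c (n - 1) = 1 ∧ isCycleRep (nextMap (n := n) fPRR) (xState c))
      then fPRR c + 1 else fPRR c) := by
  haveI : NeZero (n - 1) := ⟨by omega⟩
  constructor
  · intro v hne _
    exact PRRAux.exists_zero_head hn hne
  · exact PRRAux.main_db hn hmem hconst hval
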